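/- arXiv:2106.08054 — 2 statements merged into one kernel-verified Lean document; each statement's English description precedes it below -/
import Mathlib

section
/- (Sewing Lemma) Let g : [0,T]² → ℝ be continuous with g_{t,t} = 0 for all t, and suppose that the 3-increment δ₂g, defined by (δ₂g)_{t₁,t₂,t₃} = −g_{t₂,t₃} + g_{t₁,t₃} − g_{t₁,t₂}, satisfies ‖δ₂g‖_μ < ∞ for some μ > 1, where ‖h‖_μ := inf{ Σ_i ‖h^i‖_{ρ_i, μ−ρ_i} : h = Σ_i h^i, 0 < ρ_i < μ } and ‖h‖_{α,β} := sup_{s,u,t ∈ [0,T]} |h_{t,u,s}| / (|u−s|^α |t−s|^β). Then there exist a continuous function I : [0,T] → ℝ, unique up to an additive constant, and a function ℛ : [0,T]² → ℝ with sup_{s,t} |ℛ_{s,t}|/|t−s|^μ < ∞, such that g_{s,t} = I_t − I_s + ℛ_{s,t} for all s,t ∈ [0,T]. -/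
open Set Finset Filter Topology

private lemma sum_range_split' (f : ℕ → ℝ) (a b : ℕ) :
    ∑ i ∈ Finset.range (a+b), f i
      = ∑ i ∈ Finset.range a, f i + ∑ i ∈ Finset.range b, f (a+i) := by
  induction b with
  | zero => simp
  | succ b ih => rw [← Nat.add_assoc, Finset.sum_range_succ, ih, Finset.sum_range_succ]; ring

private lemma sum_range_two_mul' (f : ℕ → ℝ) (m : ℕ) :
    ∑ i ∈ Finset.range (2*m), f i = ∑ k ∈ Finset.range m, (f (2*k) + f (2*k+1)) := by
  induction m with
  | zero => simp
  | succ m ih =>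
    have h2 : 2*(m+1) = (2*m)+1+1 := by ring
    rw [h2, Finset.sum_range_succ, Finset.sum_range_succ, ih, Finset.sum_range_succ]
    ring

section core

variable {T μ K : ℝ} {g : ℝ → ℝ → ℝ}

set_option maxHeartbeats 1600000 in
private lemma key_uniform (hT : 0 < T) (hμ : 1 < μ) (hK : 0 ≤ K)
    (hgdiag : ∀ t ∈ Icc (0:ℝ) T, g t t = 0)
    (hd : ∀ s ∈ Icc (0:ℝ) T, ∀ u ∈ Icc (0:ℝ) T, ∀ t ∈ Icc (0:ℝ) T, u ≠ t → s ≠ t →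
      |g s t - g s u - g u t| ≤ K * (max |u - t| |s - t|) ^ μ) :
    ∀ j : ℕ, ∀ s Δ : ℝ, 0 ≤ s → 0 ≤ Δ → s + j*Δ ≤ T →
      |(∑ k ∈ Finset.range j, g (s+k*Δ) (s+(k+1)*Δ)) - g s (s + j*Δ)|
        ≤ (K/(1-(2/3:ℝ)^(μ-1))) * ((j:ℝ)*Δ)^μ := by
  have hθ0 : 0 ≤ (2/3:ℝ)^(μ-1) := Real.rpow_nonneg (by norm_num) _
  have hθ1 : (2/3:ℝ)^(μ-1) < 1 := Real.rpow_lt_one (by norm_num) (by norm_num) (by linarith)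
  obtain ⟨θ, hθdef⟩ : ∃ θ, θ = (2/3:ℝ)^(μ-1) := ⟨_, rfl⟩
  rw [← hθdef] at hθ0 hθ1 ⊢
  obtain ⟨C, hCdef⟩ : ∃ C, C = K/(1-θ) := ⟨_, rfl⟩
  rw [← hCdef]
  have hC0 : 0 ≤ C := hCdef ▸ div_nonneg hK (by linarith)
  have h1θ : (1:ℝ) - θ ≠ 0 := by linarith
  have hCK : θ*C + K = C := by rw [hCdef]; field_simp; ring
  intro j
  induction j using Nat.strong_induction_on with
  | _ j ih =>
  intro s Δ hs hΔ hsT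
  rcases Nat.lt_or_ge j 2 with hj2 | hj2
  · interval_cases j
    · simp only [Nat.cast_zero, Finset.range_zero, Finset.sum_empty, zero_mul, add_zero,
        zero_sub, abs_neg]
      rw [hgdiag s ⟨hs, by simpa using hsT⟩]
      simp [Real.zero_rpow (by linarith : μ ≠ 0)]
    · simp only [Nat.cast_one, Finset.range_one, Finset.sum_singleton, Nat.cast_zero]
      norm_num
      exact mul_nonneg hC0 (Real.rpow_nonneg (by positivity) _)
  · -- j ≥ 2
    rcases eq_or_lt_of_le hΔ with hΔ0 | hΔ0
    · rw [← hΔ0]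
      have hsI : s ∈ Icc (0:ℝ) T := ⟨hs, by nlinarith⟩
      simp [hgdiag s hsI, Real.zero_rpow (by linarith : μ ≠ 0)]
    obtain ⟨q, hq⟩ : ∃ q, q = j/2 := ⟨_, rfl⟩
    obtain ⟨q', hq'⟩ : ∃ q', q' = j - j/2 := ⟨_, rfl⟩
    have hqq' : q + q' = j := by omega
    have hqj : q < j := by omega
    have hq'j : q' < j := by omega
    -- real versions
    have hq1 : (1:ℝ) ≤ (q:ℝ) := by exact_mod_cast Nat.one_le_iff_ne_zero.2 (by omega)
    have hq'1 : (1:ℝ) ≤ (q':ℝ) := by exact_mod_cast Nat.one_le_iff_ne_zero.2 (by omega)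
    have hsumR : (q:ℝ) + (q':ℝ) = (j:ℝ) := by exact_mod_cast hqq'
    have h3q' : 3*(q':ℝ) ≤ 2*(j:ℝ) := by exact_mod_cast (by omega : 3*q' ≤ 2*j)
    have hqle : (q:ℝ) ≤ (q':ℝ) := by exact_mod_cast (by omega : q ≤ q')
    have hjR : (2:ℝ) ≤ (j:ℝ) := by exact_mod_cast hj2
    have hjpos : (0:ℝ) < (j:ℝ)*Δ := by
      apply mul_pos (by linarith) hΔ0
    have hqpos : (0:ℝ) < (q:ℝ)*Δ := mul_pos (by linarith) hΔ0
    have hq'pos : (0:ℝ) < (q':ℝ)*Δ := mul_pos (by linarith) hΔ0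
    have hqΔlt : (q:ℝ)*Δ < (j:ℝ)*Δ :=
      mul_lt_mul_of_pos_right (by linarith) hΔ0
    have hsI : s ∈ Icc (0:ℝ) T := ⟨hs, by linarith⟩
    have huI : s + q*Δ ∈ Icc (0:ℝ) T := ⟨by linarith, by linarith⟩
    have htI : s + j*Δ ∈ Icc (0:ℝ) T := ⟨by linarith, hsT⟩
    have huq' : (s + q*Δ) + q'*Δ = s + j*Δ := by
      rw [add_assoc, ← add_mul, hsumR]
    have h3qR : 3*(q:ℝ) ≤ 2*(j:ℝ) := by linarith
    have hle23q : (q:ℝ)*Δ ≤ (2/3:ℝ)*((j:ℝ)*Δ) := by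
      nlinarith [mul_nonneg (by linarith : (0:ℝ) ≤ 2*(j:ℝ)-3*(q:ℝ)) hΔ]
    have hle23q' : (q':ℝ)*Δ ≤ (2/3:ℝ)*((j:ℝ)*Δ) := by
      nlinarith [mul_nonneg (by linarith : (0:ℝ) ≤ 2*(j:ℝ)-3*(q':ℝ)) hΔ]
    -- split the sum
    have hsplit : ∑ k ∈ Finset.range j, g (s+k*Δ) (s+(k+1)*Δ)
        = (∑ k ∈ Finset.range q, g (s+k*Δ) (s+(k+1)*Δ))
          + ∑ k ∈ Finset.range q', g ((s+q*Δ)+k*Δ) ((s+q*Δ)+(k+1)*Δ) := by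
      rw [← hqq', sum_range_split']
      congr 1
      refine Finset.sum_congr rfl fun k _ => ?_
      push_cast
      ring_nf
    have ih1 := ih q hqj s Δ hs hΔ (by linarith)
    have ih2 := ih q' hq'j (s + q*Δ) Δ huI.1 hΔ (by rw [huq']; exact hsT)
    rw [huq'] at ih2
    have hut : s + q*Δ ≠ s + j*Δ := by intro h; linarith [sub_eq_zero.2 h]
    have hst : s ≠ s + j*Δ := by intro h; linarith [sub_eq_zero.2 h]
    have hmax : max |(s+q*Δ) - (s+j*Δ)| |s - (s+j*Δ)| = (j:ℝ)*Δ := by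
      rw [abs_of_nonpos (by linarith), abs_of_nonpos (by linarith),
        max_eq_right (by linarith)]
      ring
    have hd2 := hd s hsI (s+q*Δ) huI (s+j*Δ) htI hut hst
    rw [hmax] at hd2
    -- convexity-type bound
    have e1 : ((q:ℝ)*Δ)^μ = ((q:ℝ)*Δ) * ((q:ℝ)*Δ)^(μ-1) := by
      nth_rewrite 1 [show μ = 1 + (μ-1) by ring]
      rw [Real.rpow_add hqpos, Real.rpow_one]
    have e2 : ((q':ℝ)*Δ)^μ = ((q':ℝ)*Δ) * ((q':ℝ)*Δ)^(μ-1) := by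
      nth_rewrite 1 [show μ = 1 + (μ-1) by ring]
      rw [Real.rpow_add hq'pos, Real.rpow_one]
    have hle1 : ((q:ℝ)*Δ)^(μ-1) ≤ ((2/3:ℝ)*((j:ℝ)*Δ))^(μ-1) :=
      Real.rpow_le_rpow hqpos.le hle23q (by linarith)
    have hle2 : ((q':ℝ)*Δ)^(μ-1) ≤ ((2/3:ℝ)*((j:ℝ)*Δ))^(μ-1) :=
      Real.rpow_le_rpow hq'pos.le hle23q' (by linarith)
    have hfact : ((2/3:ℝ)*((j:ℝ)*Δ))^(μ-1) = θ * ((j:ℝ)*Δ)^(μ-1) := by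
      rw [Real.mul_rpow (by norm_num) hjpos.le, hθdef]
    have e3 : ((j:ℝ)*Δ) * ((j:ℝ)*Δ)^(μ-1) = ((j:ℝ)*Δ)^μ := by
      nth_rewrite 2 [show μ = 1 + (μ-1) by ring]
      rw [Real.rpow_add hjpos, Real.rpow_one]
    have hpow : C * ((q:ℝ)*Δ)^μ + C * ((q':ℝ)*Δ)^μ ≤ C * θ * ((j:ℝ)*Δ)^μ := by
      have b1 : ((q:ℝ)*Δ)^μ ≤ ((q:ℝ)*Δ) * (θ * ((j:ℝ)*Δ)^(μ-1)) := by
        rw [e1]; rw [hfact] at hle1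
        exact mul_le_mul_of_nonneg_left hle1 hqpos.le
      have b2 : ((q':ℝ)*Δ)^μ ≤ ((q':ℝ)*Δ) * (θ * ((j:ℝ)*Δ)^(μ-1)) := by
        rw [e2]; rw [hfact] at hle2
        exact mul_le_mul_of_nonneg_left hle2 hq'pos.le
      have hsum2 : ((q:ℝ)*Δ) + ((q':ℝ)*Δ) = (j:ℝ)*Δ := by rw [← add_mul, hsumR]
      calc C * ((q:ℝ)*Δ)^μ + C * ((q':ℝ)*Δ)^μ
          ≤ C * (((q:ℝ)*Δ) * (θ * ((j:ℝ)*Δ)^(μ-1)))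
            + C * (((q':ℝ)*Δ) * (θ * ((j:ℝ)*Δ)^(μ-1))) := by
            have := mul_le_mul_of_nonneg_left b1 hC0
            have := mul_le_mul_of_nonneg_left b2 hC0
            linarith
        _ = C * θ * ((((q:ℝ)*Δ) + ((q':ℝ)*Δ)) * ((j:ℝ)*Δ)^(μ-1)) := by ring
        _ = C * θ * ((j:ℝ)*Δ)^μ := by rw [hsum2, e3]
    -- combine
    have habs : (∑ k ∈ Finset.range j, g (s+k*Δ) (s+(k+1)*Δ)) - g s (s + j*Δ)
        = ((∑ k ∈ Finset.range q, g (s+k*Δ) (s+(k+1)*Δ)) - g s (s + q*Δ))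
          + ((∑ k ∈ Finset.range q', g ((s+q*Δ)+k*Δ) ((s+q*Δ)+(k+1)*Δ)) - g (s+q*Δ) (s+j*Δ))
          - (g s (s+j*Δ) - g s (s+q*Δ) - g (s+q*Δ) (s+j*Δ)) := by
      rw [hsplit]; ring
    calc |(∑ k ∈ Finset.range j, g (s+k*Δ) (s+(k+1)*Δ)) - g s (s + j*Δ)|
        ≤ C * ((q:ℝ)*Δ)^μ + C * ((q':ℝ)*Δ)^μ + K * ((j:ℝ)*Δ)^μ := by
          rw [habs]
          have := abs_sub (((∑ k ∈ Finset.range q, g (s+k*Δ) (s+(k+1)*Δ)) - g s (s + q*Δ))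
            + ((∑ k ∈ Finset.range q', g ((s+q*Δ)+k*Δ) ((s+q*Δ)+(k+1)*Δ)) - g (s+q*Δ) (s+j*Δ)))
            (g s (s+j*Δ) - g s (s+q*Δ) - g (s+q*Δ) (s+j*Δ))
          have h2 := abs_add_le ((∑ k ∈ Finset.range q, g (s+k*Δ) (s+(k+1)*Δ)) - g s (s + q*Δ))
            ((∑ k ∈ Finset.range q', g ((s+q*Δ)+k*Δ) ((s+q*Δ)+(k+1)*Δ)) - g (s+q*Δ) (s+j*Δ))
          linarith
      _ ≤ C * θ * ((j:ℝ)*Δ)^μ + K * ((j:ℝ)*Δ)^μ := by linarith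
      _ = (θ*C + K) * ((j:ℝ)*Δ)^μ := by ring
      _ = C * ((j:ℝ)*Δ)^μ := by rw [hCK]

private noncomputable def Iapp (T : ℝ) (g : ℝ → ℝ → ℝ) (n : ℕ) (t : ℝ) : ℝ :=
  (∑ k ∈ Finset.range ⌊t/(T/2^n)⌋₊, g (k*(T/2^n)) ((k+1)*(T/2^n)))
    + g ((⌊t/(T/2^n)⌋₊ : ℝ)*(T/2^n)) t

private lemma floor_mul_le {x d : ℝ} (hx : 0 ≤ x) (hd : 0 < d) : (⌊x/d⌋₊:ℝ)*d ≤ x := by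
  have h := Nat.floor_le (div_nonneg hx hd.le)
  calc (⌊x/d⌋₊:ℝ)*d ≤ (x/d)*d := by gcongr
    _ = x := by field_simp

private lemma lt_floor_succ_mul (x : ℝ) {d : ℝ} (hd : 0 < d) : x < ((⌊x/d⌋₊:ℝ)+1)*d := by
  have h := Nat.lt_floor_add_one (x/d)
  calc x = (x/d)*d := by field_simp
    _ < ((⌊x/d⌋₊:ℝ)+1)*d := by gcongr

set_option maxHeartbeats 1600000 in
private lemma Iapp_local (hT : 0 < T) (hμ : 1 < μ) (hK : 0 ≤ K)
    (hgdiag : ∀ t ∈ Icc (0:ℝ) T, g t t = 0)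
    (hd : ∀ s ∈ Icc (0:ℝ) T, ∀ u ∈ Icc (0:ℝ) T, ∀ t ∈ Icc (0:ℝ) T, u ≠ t → s ≠ t →
      |g s t - g s u - g u t| ≤ K * (max |u - t| |s - t|) ^ μ)
    (n : ℕ) {s t : ℝ} (hsI : s ∈ Icc (0:ℝ) T) (htI : t ∈ Icc (0:ℝ) T) (hst : s ≤ t) :
    |Iapp T g n t - Iapp T g n s - g s t|
      ≤ (K/(1-(2/3:ℝ)^(μ-1)) + 2*K) * (t - s + T/2^n)^μ := by
  have key := key_uniform hT hμ hK hgdiag hd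
  have hθ0 : 0 ≤ (2/3:ℝ)^(μ-1) := Real.rpow_nonneg (by norm_num) _
  have hθ1 : (2/3:ℝ)^(μ-1) < 1 := Real.rpow_lt_one (by norm_num) (by norm_num) (by linarith)
  have hC0 : 0 ≤ K/(1-(2/3:ℝ)^(μ-1)) := div_nonneg hK (by linarith)
  unfold Iapp
  obtain ⟨Δ, hΔdef⟩ : ∃ d, d = T/2^n := ⟨_, rfl⟩
  have hΔ0 : 0 < Δ := by rw [hΔdef]; positivity
  obtain ⟨C, hCdef⟩ : ∃ C, C = K/(1-(2/3:ℝ)^(μ-1)) := ⟨_, rfl⟩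
  rw [← hCdef] at hC0
  rw [← hΔdef, ← hCdef]
  rcases eq_or_lt_of_le hst with rfl | hlt
  · have : (∑ k ∈ Finset.range ⌊s/Δ⌋₊, g (k*Δ) ((k+1)*Δ)) + g ((⌊s/Δ⌋₊:ℝ)*Δ) s
        - ((∑ k ∈ Finset.range ⌊s/Δ⌋₊, g (k*Δ) ((k+1)*Δ)) + g ((⌊s/Δ⌋₊:ℝ)*Δ) s) - g s s
        = - g s s := by ring
    rw [this, hgdiag s hsI, abs_neg, abs_zero]
    have : 0 ≤ (s - s + Δ)^μ := Real.rpow_nonneg (by linarith) _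
    nlinarith
  -- s < t
  obtain ⟨ms, hmsdef⟩ : ∃ m, m = ⌊s/Δ⌋₊ := ⟨_, rfl⟩
  obtain ⟨mt, hmtdef⟩ : ∃ m, m = ⌊t/Δ⌋₊ := ⟨_, rfl⟩
  have hms1 : (ms:ℝ)*Δ ≤ s := hmsdef ▸ floor_mul_le hsI.1 hΔ0
  have hms2 : s < ((ms:ℝ)+1)*Δ := hmsdef ▸ lt_floor_succ_mul s hΔ0
  have hmt1 : (mt:ℝ)*Δ ≤ t := hmtdef ▸ floor_mul_le htI.1 hΔ0
  have hmm : ms ≤ mt := by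
    rw [hmsdef, hmtdef]
    exact Nat.floor_le_floor (by gcongr)
  have hmmR : (ms:ℝ) ≤ (mt:ℝ) := by exact_mod_cast hmm
  rw [← hmsdef, ← hmtdef]
  -- difference formula
  have hdiff : (∑ k ∈ Finset.range mt, g (k*Δ) ((k+1)*Δ)) + g ((mt:ℝ)*Δ) t
      - ((∑ k ∈ Finset.range ms, g (k*Δ) ((k+1)*Δ)) + g ((ms:ℝ)*Δ) s)
      = (∑ k ∈ Finset.range (mt - ms), g (((ms:ℝ)*Δ) + k*Δ) (((ms:ℝ)*Δ) + (k+1)*Δ))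
        + g ((mt:ℝ)*Δ) t - g ((ms:ℝ)*Δ) s := by
    have h1 : ∑ k ∈ Finset.Ico ms mt, g (k*Δ) ((k+1)*Δ)
        = (∑ k ∈ Finset.range mt, g (k*Δ) ((k+1)*Δ))
          - ∑ k ∈ Finset.range ms, g (k*Δ) ((k+1)*Δ) := Finset.sum_Ico_eq_sub _ hmm
    have h2 : ∑ k ∈ Finset.Ico ms mt, g (k*Δ) ((k+1)*Δ)
        = ∑ k ∈ Finset.range (mt - ms), g (((ms:ℝ)*Δ) + k*Δ) (((ms:ℝ)*Δ) + (k+1)*Δ) := by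
      rw [Finset.sum_Ico_eq_sum_range]
      refine Finset.sum_congr rfl fun k _ => ?_
      push_cast
      ring_nf
    rw [← h2, h1]
    ring
  rw [hdiff]
  -- apply key lemma to the middle sum
  have hcast : ((mt - ms : ℕ):ℝ) = (mt:ℝ) - (ms:ℝ) := by
    push_cast [Nat.cast_sub hmm]
    ring
  have hb : ((ms:ℝ)*Δ) + ((mt-ms:ℕ):ℝ)*Δ = (mt:ℝ)*Δ := by rw [hcast]; ring
  have hkey := key (mt - ms) ((ms:ℝ)*Δ) Δ (by positivity) hΔ0.le
    (by rw [hb]; linarith [htI.2])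
  rw [hb, ← hCdef] at hkey
  -- bounds on the points
  have haa : 0 ≤ (ms:ℝ)*Δ := by positivity
  have haI : (ms:ℝ)*Δ ∈ Icc (0:ℝ) T := ⟨haa, by linarith [hsI.2]⟩
  have hbI : (mt:ℝ)*Δ ∈ Icc (0:ℝ) T := ⟨by positivity, by linarith [htI.2]⟩
  have hbmd : (mt:ℝ)*Δ - (ms:ℝ)*Δ ≤ t - s + Δ := by nlinarith
  have hat : (ms:ℝ)*Δ ≠ t := by intro h; rw [← h] at hlt; nlinarith
  have hta : t - (ms:ℝ)*Δ ≤ t - s + Δ := by nlinarith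
  -- E1
  have E1 : |(∑ k ∈ Finset.range (mt - ms), g (((ms:ℝ)*Δ) + k*Δ) (((ms:ℝ)*Δ) + (k+1)*Δ))
      - g ((ms:ℝ)*Δ) ((mt:ℝ)*Δ)| ≤ C * (t - s + Δ)^μ := by
    refine hkey.trans ?_
    have h1 : ((mt-ms:ℕ):ℝ)*Δ = (mt:ℝ)*Δ - (ms:ℝ)*Δ := by rw [hcast]; ring
    rw [h1]
    exact mul_le_mul_of_nonneg_left
      (Real.rpow_le_rpow (by nlinarith) hbmd (by linarith)) hC0
  -- E2
  have E2 : |g ((ms:ℝ)*Δ) t - g ((ms:ℝ)*Δ) ((mt:ℝ)*Δ) - g ((mt:ℝ)*Δ) t|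
      ≤ K * (t - s + Δ)^μ := by
    by_cases hbt : (mt:ℝ)*Δ = t
    · rw [hbt, hgdiag t htI]
      have : g ((ms:ℝ)*Δ) t - g ((ms:ℝ)*Δ) t - 0 = 0 := by ring
      rw [this, abs_zero]
      have : 0 ≤ (t - s + Δ)^μ := Real.rpow_nonneg (by linarith) _
      nlinarith
    · refine (hd _ haI _ hbI _ htI hbt hat).trans ?_
      have hmax : max |(mt:ℝ)*Δ - t| |(ms:ℝ)*Δ - t| ≤ t - s + Δ := by
        rw [abs_of_nonpos (by linarith), abs_of_nonpos (by linarith)]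
        apply max_le (by nlinarith) (by nlinarith)
      exact mul_le_mul_of_nonneg_left
        (Real.rpow_le_rpow (le_trans (abs_nonneg _) (le_max_left _ _)) hmax (by linarith)) hK
  -- E3
  have E3 : |g ((ms:ℝ)*Δ) t - g ((ms:ℝ)*Δ) s - g s t| ≤ K * (t - s + Δ)^μ := by
    refine (hd _ haI _ hsI _ htI hlt.ne hat).trans ?_
    have hmax : max |s - t| |(ms:ℝ)*Δ - t| ≤ t - s + Δ := by
      rw [abs_of_nonpos (by linarith), abs_of_nonpos (by linarith)]
      apply max_le (by nlinarith) (by nlinarith)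
    exact mul_le_mul_of_nonneg_left
      (Real.rpow_le_rpow (le_trans (abs_nonneg _) (le_max_left _ _)) hmax (by linarith)) hK
  -- combine
  have hsplit : (∑ k ∈ Finset.range (mt - ms), g (((ms:ℝ)*Δ) + k*Δ) (((ms:ℝ)*Δ) + (k+1)*Δ))
      + g ((mt:ℝ)*Δ) t - g ((ms:ℝ)*Δ) s - g s t
      = ((∑ k ∈ Finset.range (mt - ms), g (((ms:ℝ)*Δ) + k*Δ) (((ms:ℝ)*Δ) + (k+1)*Δ))
          - g ((ms:ℝ)*Δ) ((mt:ℝ)*Δ))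
        - (g ((ms:ℝ)*Δ) t - g ((ms:ℝ)*Δ) ((mt:ℝ)*Δ) - g ((mt:ℝ)*Δ) t)
        + (g ((ms:ℝ)*Δ) t - g ((ms:ℝ)*Δ) s - g s t) := by ring
  rw [hsplit]
  have habs : ∀ x y z : ℝ, |x - y + z| ≤ |x| + |y| + |z| := by
    intro x y z
    calc |x - y + z| ≤ |x - y| + |z| := abs_add_le _ _
      _ ≤ |x| + |y| + |z| := by
          have h := abs_sub x y
          linarith
  refine (habs _ _ _).trans ?_
  linarith [E1, E2, E3]

set_option maxHeartbeats 1600000 in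
private lemma Iapp_step (hT : 0 < T) (hμ : 1 < μ) (hK : 0 ≤ K)
    (hgdiag : ∀ t ∈ Icc (0:ℝ) T, g t t = 0)
    (hd : ∀ s ∈ Icc (0:ℝ) T, ∀ u ∈ Icc (0:ℝ) T, ∀ t ∈ Icc (0:ℝ) T, u ≠ t → s ≠ t →
      |g s t - g s u - g u t| ≤ K * (max |u - t| |s - t|) ^ μ)
    (n : ℕ) {t : ℝ} (htI : t ∈ Icc (0:ℝ) T) :
    |Iapp T g (n+1) t - Iapp T g n t| ≤ (2*K*T^μ) * ((2:ℝ)^(1-μ))^n := by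
  obtain ⟨Δ, hΔdef⟩ : ∃ d, d = T/2^n := ⟨_, rfl⟩
  have hΔ0 : 0 < Δ := by rw [hΔdef]; positivity
  have hΔ'def : T/2^(n+1) = Δ/2 := by rw [hΔdef, pow_succ]; ring
  obtain ⟨m, hmdef⟩ : ∃ m, m = ⌊t/Δ⌋₊ := ⟨_, rfl⟩
  have hm1 : (m:ℝ)*Δ ≤ t := hmdef ▸ floor_mul_le htI.1 hΔ0
  have hm2 : t < ((m:ℝ)+1)*Δ := hmdef ▸ lt_floor_succ_mul t hΔ0
  obtain ⟨m', hm'def⟩ : ∃ m, m = ⌊t/(Δ/2)⌋₊ := ⟨_, rfl⟩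
  have hm'1 : (m':ℝ)*(Δ/2) ≤ t := hm'def ▸ floor_mul_le htI.1 (by linarith)
  have hm'2 : t < ((m':ℝ)+1)*(Δ/2) := hm'def ▸ lt_floor_succ_mul t (by linarith)
  have hm'lb : 2*m ≤ m' := by
    rw [hm'def]
    apply Nat.le_floor
    rw [le_div_iff₀ (by linarith)]
    push_cast
    linarith
  have hm'ub : m' < 2*m+2 := by
    rw [hm'def]
    rw [Nat.floor_lt (div_nonneg htI.1 (by linarith))]
    rw [div_lt_iff₀ (by linarith)]
    push_cast
    linarith
  -- rewrite Iapp at both levels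
  have hIn : Iapp T g n t = (∑ k ∈ Finset.range m, g (k*Δ) ((k+1)*Δ)) + g ((m:ℝ)*Δ) t := by
    unfold Iapp
    rw [← hΔdef, ← hmdef]
  have hIn' : Iapp T g (n+1) t
      = (∑ k ∈ Finset.range m', g (k*(Δ/2)) ((k+1)*(Δ/2))) + g ((m':ℝ)*(Δ/2)) t := by
    unfold Iapp
    rw [hΔ'def, ← hm'def]
  -- pairing
  have hpair : ∑ k ∈ Finset.range (2*m), g (k*(Δ/2)) ((k+1)*(Δ/2))
      = ∑ k ∈ Finset.range m, (g ((k:ℝ)*Δ) ((k:ℝ)*Δ + Δ/2) + g ((k:ℝ)*Δ + Δ/2) (((k:ℝ)+1)*Δ)) := by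
    rw [sum_range_two_mul' (fun k => g (k*(Δ/2)) ((k+1)*(Δ/2)))]
    refine Finset.sum_congr rfl fun k _ => ?_
    have e1 : ((2*k : ℕ):ℝ)*(Δ/2) = (k:ℝ)*Δ := by push_cast; ring
    have e2 : (((2*k : ℕ):ℝ)+1)*(Δ/2) = (k:ℝ)*Δ + Δ/2 := by push_cast; ring
    have e3 : ((2*k+1 : ℕ):ℝ)*(Δ/2) = (k:ℝ)*Δ + Δ/2 := by push_cast; ring
    have e4 : (((2*k+1 : ℕ):ℝ)+1)*(Δ/2) = ((k:ℝ)+1)*Δ := by push_cast; ring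
    rw [e1, e2, e3, e4]
  -- per-interval bound
  have hkbd : ∀ k ∈ Finset.range m,
      |(g ((k:ℝ)*Δ) ((k:ℝ)*Δ + Δ/2) + g ((k:ℝ)*Δ + Δ/2) (((k:ℝ)+1)*Δ)) - g ((k:ℝ)*Δ) (((k:ℝ)+1)*Δ)|
        ≤ K * Δ^μ := by
    intro k hk
    have hkm : (k:ℝ)+1 ≤ (m:ℝ) := by exact_mod_cast Finset.mem_range.1 hk
    have hk0 : (0:ℝ) ≤ (k:ℝ) := Nat.cast_nonneg k
    have h1I : (k:ℝ)*Δ ∈ Icc (0:ℝ) T := ⟨by positivity, by nlinarith [htI.2]⟩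
    have h2I : (k:ℝ)*Δ + Δ/2 ∈ Icc (0:ℝ) T := ⟨by positivity, by nlinarith [htI.2]⟩
    have h3I : ((k:ℝ)+1)*Δ ∈ Icc (0:ℝ) T := ⟨by positivity, by nlinarith [htI.2]⟩
    have hne1 : (k:ℝ)*Δ + Δ/2 ≠ ((k:ℝ)+1)*Δ := by intro h; nlinarith [sub_eq_zero.2 h]
    have hne2 : (k:ℝ)*Δ ≠ ((k:ℝ)+1)*Δ := by intro h; nlinarith [sub_eq_zero.2 h]
    have hb := hd _ h1I _ h2I _ h3I hne1 hne2
    have hmax : max |((k:ℝ)*Δ + Δ/2) - ((k:ℝ)+1)*Δ| |(k:ℝ)*Δ - ((k:ℝ)+1)*Δ| = Δ := by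
      rw [abs_of_nonpos (by linarith), abs_of_nonpos (by linarith)]
      rw [max_eq_right (by linarith)]
      ring
    rw [hmax] at hb
    have : (g ((k:ℝ)*Δ) ((k:ℝ)*Δ + Δ/2) + g ((k:ℝ)*Δ + Δ/2) (((k:ℝ)+1)*Δ)) - g ((k:ℝ)*Δ) (((k:ℝ)+1)*Δ)
        = -(g ((k:ℝ)*Δ) (((k:ℝ)+1)*Δ) - g ((k:ℝ)*Δ) ((k:ℝ)*Δ + Δ/2) - g ((k:ℝ)*Δ + Δ/2) (((k:ℝ)+1)*Δ)) := by
      ring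
    rw [this, abs_neg]
    exact hb
  -- sum of differences bound
  have hsumbd : |∑ k ∈ Finset.range m,
      ((g ((k:ℝ)*Δ) ((k:ℝ)*Δ + Δ/2) + g ((k:ℝ)*Δ + Δ/2) (((k:ℝ)+1)*Δ)) - g ((k:ℝ)*Δ) (((k:ℝ)+1)*Δ))|
      ≤ (m:ℝ) * (K * Δ^μ) := by
    refine (Finset.abs_sum_le_sum_abs _ _).trans ?_
    refine (Finset.sum_le_sum hkbd).trans ?_
    rw [Finset.sum_const, Finset.card_range, nsmul_eq_mul]
  have hKΔ0 : 0 ≤ K * Δ^μ := mul_nonneg hK (Real.rpow_nonneg hΔ0.le _)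
  -- final numeric bound
  have hfinal : ((m:ℝ)+1)*(K*Δ^μ) ≤ (2*K*T^μ) * ((2:ℝ)^(1-μ))^n := by
    obtain ⟨P, hPdef⟩ : ∃ P, P = ((2:ℝ)^n : ℝ) := ⟨_, rfl⟩
    have hP : 0 < P := by rw [hPdef]; positivity
    have hTP : T = Δ*P := by rw [hΔdef, hPdef]; field_simp
    have hmP : (m:ℝ) ≤ P := by
      have h1 : (m:ℝ)*Δ ≤ P*Δ := by rw [mul_comm P Δ, ← hTP]; linarith [htI.2]
      exact le_of_mul_le_mul_right h1 hΔ0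
    have hP1 : (1:ℝ) ≤ P := by rw [hPdef]; exact_mod_cast Nat.one_le_two_pow
    have hTμ : T^μ = Δ^μ * P^μ := by
      rw [hTP, Real.mul_rpow hΔ0.le hP.le]
    have hpw : ((2:ℝ)^(1-μ))^n = P^(1-μ) := by
      rw [hPdef, ← Real.rpow_natCast ((2:ℝ)^(1-μ)) n, ← Real.rpow_natCast (2:ℝ) n,
        ← Real.rpow_mul (by norm_num), ← Real.rpow_mul (by norm_num), mul_comm]
    have hP1μ : P^(1-μ) = P/P^μ := by
      rw [Real.rpow_sub hP, Real.rpow_one]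
    have hPμ0 : (0:ℝ) < P^μ := Real.rpow_pos_of_pos hP _
    calc ((m:ℝ)+1)*(K*Δ^μ) ≤ (2*P)*(K*Δ^μ) :=
          mul_le_mul_of_nonneg_right (by linarith) hKΔ0
      _ = (2*K*T^μ) * ((2:ℝ)^(1-μ))^n := by
          rw [hpw, hP1μ, hTμ]
          field_simp
  -- case analysis on m'
  rcases (by omega : m' = 2*m ∨ m' = 2*m+1) with hc | hc
  · -- m' = 2m
    have ecast : ((2*m:ℕ):ℝ)*(Δ/2) = (m:ℝ)*Δ := by push_cast; ring
    have hdiff : Iapp T g (n+1) t - Iapp T g n t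
        = ∑ k ∈ Finset.range m,
          ((g ((k:ℝ)*Δ) ((k:ℝ)*Δ + Δ/2) + g ((k:ℝ)*Δ + Δ/2) (((k:ℝ)+1)*Δ)) - g ((k:ℝ)*Δ) (((k:ℝ)+1)*Δ)) := by
      rw [hIn', hIn, hc, hpair, ecast, Finset.sum_sub_distrib]
      ring
    rw [hdiff]
    refine hsumbd.trans ?_
    have : (m:ℝ)*(K*Δ^μ) ≤ ((m:ℝ)+1)*(K*Δ^μ) := by nlinarith
    linarith [hfinal]
  · -- m' = 2m+1
    have ecast1 : ((2*m:ℕ):ℝ)*(Δ/2) = (m:ℝ)*Δ := by push_cast; ring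
    have ecast2 : (((2*m:ℕ):ℝ)+1)*(Δ/2) = (m:ℝ)*Δ + Δ/2 := by push_cast; ring
    have ecast3 : ((2*m+1:ℕ):ℝ)*(Δ/2) = (m:ℝ)*Δ + Δ/2 := by push_cast; ring
    have hm'1' : (m:ℝ)*Δ + Δ/2 ≤ t := by
      rw [← ecast3, ← hc]
      exact hm'1
    have htail : |g ((m:ℝ)*Δ) ((m:ℝ)*Δ + Δ/2) + g ((m:ℝ)*Δ + Δ/2) t - g ((m:ℝ)*Δ) t|
        ≤ K * Δ^μ := by
      have hmI : (m:ℝ)*Δ ∈ Icc (0:ℝ) T := ⟨by positivity, by linarith [htI.2]⟩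
      have hmI2 : (m:ℝ)*Δ + Δ/2 ∈ Icc (0:ℝ) T := ⟨by positivity, by linarith [htI.2]⟩
      by_cases hbt : (m:ℝ)*Δ + Δ/2 = t
      · rw [hbt, hgdiag t htI]
        have he : g ((m:ℝ)*Δ) t + 0 - g ((m:ℝ)*Δ) t = 0 := by ring
        rw [he, abs_zero]
        exact hKΔ0
      · have hmt : (m:ℝ)*Δ ≠ t := by intro h; rw [h] at hm'1'; linarith
        have hb := hd _ hmI _ hmI2 _ htI hbt hmt
        have hmax : max |((m:ℝ)*Δ + Δ/2) - t| |(m:ℝ)*Δ - t| ≤ Δ := by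
          rw [abs_of_nonpos (by linarith), abs_of_nonpos (by linarith)]
          apply max_le (by linarith) (by linarith)
        have he : g ((m:ℝ)*Δ) ((m:ℝ)*Δ + Δ/2) + g ((m:ℝ)*Δ + Δ/2) t - g ((m:ℝ)*Δ) t
            = -(g ((m:ℝ)*Δ) t - g ((m:ℝ)*Δ) ((m:ℝ)*Δ + Δ/2) - g ((m:ℝ)*Δ + Δ/2) t) := by
          ring
        rw [he, abs_neg]
        refine hb.trans ?_
        exact mul_le_mul_of_nonneg_left
          (Real.rpow_le_rpow (le_trans (abs_nonneg _) (le_max_left _ _)) hmax (by linarith)) hK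
    have hdiff : Iapp T g (n+1) t - Iapp T g n t
        = (∑ k ∈ Finset.range m,
          ((g ((k:ℝ)*Δ) ((k:ℝ)*Δ + Δ/2) + g ((k:ℝ)*Δ + Δ/2) (((k:ℝ)+1)*Δ)) - g ((k:ℝ)*Δ) (((k:ℝ)+1)*Δ)))
          + (g ((m:ℝ)*Δ) ((m:ℝ)*Δ + Δ/2) + g ((m:ℝ)*Δ + Δ/2) t - g ((m:ℝ)*Δ) t) := by
      rw [hIn', hIn, hc, Finset.sum_range_succ, hpair, ecast1, ecast2, ecast3,
        Finset.sum_sub_distrib]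
      ring
    rw [hdiff]
    refine (abs_add_le _ _).trans ?_
    have h1 : (m:ℝ)*(K*Δ^μ) + K*Δ^μ = ((m:ℝ)+1)*(K*Δ^μ) := by ring
    linarith [hsumbd, htail, hfinal]

set_option maxHeartbeats 1600000 in
private lemma sewing_exists (hT : 0 < T) (hμ : 1 < μ) (hK : 0 ≤ K)
    (hgdiag : ∀ t ∈ Icc (0:ℝ) T, g t t = 0)
    (hd : ∀ s ∈ Icc (0:ℝ) T, ∀ u ∈ Icc (0:ℝ) T, ∀ t ∈ Icc (0:ℝ) T, u ≠ t → s ≠ t →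
      |g s t - g s u - g u t| ≤ K * (max |u - t| |s - t|) ^ μ) :
    ∃ I : ℝ → ℝ, ∀ s ∈ Icc (0:ℝ) T, ∀ t ∈ Icc (0:ℝ) T, s ≤ t →
      |g s t - (I t - I s)| ≤ (K/(1-(2/3:ℝ)^(μ-1)) + 2*K) * (t - s)^μ := by
  have hr1 : ((2:ℝ)^(1-μ)) < 1 :=
    Real.rpow_lt_one_of_one_lt_of_neg (by norm_num) (by linarith)
  have hcauchy : ∀ t ∈ Icc (0:ℝ) T, CauchySeq (fun n => Iapp T g n t) := by
    intro t ht
    apply cauchySeq_of_le_geometric ((2:ℝ)^(1-μ)) (2*K*T^μ) hr1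
    intro n
    rw [Real.dist_eq, abs_sub_comm]
    exact Iapp_step hT hμ hK hgdiag hd n ht
  classical
  obtain ⟨I, hI⟩ : ∃ I : ℝ → ℝ, ∀ t ∈ Icc (0:ℝ) T,
      Filter.Tendsto (fun n => Iapp T g n t) Filter.atTop (nhds (I t)) := by
    refine ⟨fun t => if h : t ∈ Icc (0:ℝ) T then
      (cauchySeq_tendsto_of_complete (hcauchy t h)).choose else 0, fun t ht => ?_⟩
    simp only [dif_pos ht]
    exact (cauchySeq_tendsto_of_complete (hcauchy t ht)).choose_spec
  refine ⟨I, fun s hs t ht hst => ?_⟩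
  have htend : Filter.Tendsto (fun n => |Iapp T g n t - Iapp T g n s - g s t|)
      Filter.atTop (nhds (|I t - I s - g s t|)) :=
    (((hI t ht).sub (hI s hs)).sub tendsto_const_nhds).abs
  have hmesh : Filter.Tendsto (fun n : ℕ => T/2^n) Filter.atTop (nhds 0) := by
    have h1 : Filter.Tendsto (fun n : ℕ => ((1:ℝ)/2)^n) Filter.atTop (nhds 0) :=
      tendsto_pow_atTop_nhds_zero_of_lt_one (by norm_num) (by norm_num)
    have h2 := h1.const_mul T
    rw [mul_zero] at h2
    convert h2 using 2 with n
    rw [div_pow, one_pow]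
    ring
  have hrhs : Filter.Tendsto (fun n : ℕ =>
      (K/(1-(2/3:ℝ)^(μ-1)) + 2*K) * (t - s + T/2^n)^μ) Filter.atTop
      (nhds ((K/(1-(2/3:ℝ)^(μ-1)) + 2*K) * (t - s)^μ)) := by
    have hbase : Filter.Tendsto (fun n : ℕ => t - s + T/2^n) Filter.atTop (nhds (t - s)) := by
      have := (tendsto_const_nhds (x := t - s) (f := Filter.atTop (α := ℕ))).add hmesh
      rw [add_zero] at this
      exact this
    have hcont : Filter.Tendsto (fun x : ℝ => x^μ) (nhds (t - s)) (nhds ((t - s)^μ)) :=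
      (Real.continuousAt_rpow_const (t - s) μ (Or.inr (by linarith))).tendsto
    exact (hcont.comp hbase).const_mul _
  have hle : |I t - I s - g s t| ≤ (K/(1-(2/3:ℝ)^(μ-1)) + 2*K) * (t - s)^μ := by
    refine le_of_tendsto_of_tendsto' htend hrhs fun n => ?_
    exact Iapp_local hT hμ hK hgdiag hd n hs ht hst
  rw [abs_sub_comm] at hle
  exact hle

end core

/-- Quotients `|h t u s| / (|u-s|^α |t-s|^β)` of a three-parameter function on `[0,T]³`
(with the convention `0/0 = 0`, which is Lean's division by zero). -/
def threeParQuotSet (α β T : ℝ) (h : ℝ → ℝ → ℝ → ℝ) : Set ℝ :=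
  {q | ∃ s ∈ Set.Icc (0:ℝ) T, ∃ u ∈ Set.Icc (0:ℝ) T, ∃ t ∈ Set.Icc (0:ℝ) T,
    q = |h t u s| / (|u - s| ^ α * |t - s| ^ β)}

set_option maxHeartbeats 1600000 in
/-- Sewing Lemma. -/
theorem stmt6 (T μ : ℝ) (hT : 0 < T) (hμ : 1 < μ) (g : ℝ → ℝ → ℝ)
    (hgc : ContinuousOn (fun p : ℝ × ℝ => g p.1 p.2) (Icc 0 T ×ˢ Icc 0 T))
    (hgdiag : ∀ t ∈ Icc (0:ℝ) T, g t t = 0)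
    -- `‖δ₂ g‖_μ < ∞` : there is a finite decomposition `δ₂ g = Σ_i h^i` with
    -- `‖h^i‖_{ρ_i, μ - ρ_i} < ∞` and `0 < ρ_i < μ`
    (hfin : ∃ (n : ℕ) (h : Fin n → (ℝ → ℝ → ℝ → ℝ)) (ρ : Fin n → ℝ),
      (∀ i, ρ i ∈ Ioo (0:ℝ) μ) ∧
      (∀ t₁ ∈ Icc (0:ℝ) T, ∀ t₂ ∈ Icc (0:ℝ) T, ∀ t₃ ∈ Icc (0:ℝ) T,
        -g t₂ t₃ + g t₁ t₃ - g t₁ t₂ = ∑ i, h i t₁ t₂ t₃) ∧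
      (∀ i, BddAbove (threeParQuotSet (ρ i) (μ - ρ i) T (h i)))) :
    -- there is `I`, unique up to an additive constant, and `ℛ` of order `|t-s|^μ`
    -- with `g_{s,t} = I_t - I_s + ℛ_{s,t}`
    ∃ I : ℝ → ℝ, ContinuousOn I (Icc 0 T) ∧
      (∃ C : ℝ, ∀ s ∈ Icc (0:ℝ) T, ∀ t ∈ Icc (0:ℝ) T,
        |g s t - (I t - I s)| ≤ C * |t - s| ^ μ) ∧
      (∀ J : ℝ → ℝ, ContinuousOn J (Icc 0 T) →
        (∃ C : ℝ, ∀ s ∈ Icc (0:ℝ) T, ∀ t ∈ Icc (0:ℝ) T,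
          |g s t - (J t - J s)| ≤ C * |t - s| ^ μ) →
        ∃ c : ℝ, ∀ t ∈ Icc (0:ℝ) T, J t = I t + c) := by
  classical
  obtain ⟨N, h, ρ, hρ, hdec, hbdd⟩ := hfin
  choose c hc using hbdd
  obtain ⟨K, hKdef⟩ : ∃ K, K = ∑ i, c i := ⟨_, rfl⟩
  have h0I : (0:ℝ) ∈ Icc (0:ℝ) T := ⟨le_refl 0, hT.le⟩
  have hc0 : ∀ i, 0 ≤ c i := by
    intro i
    have hmem : |h i 0 0 0| / (|(0:ℝ) - 0| ^ (ρ i) * |(0:ℝ) - 0| ^ (μ - ρ i))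
        ∈ threeParQuotSet (ρ i) (μ - ρ i) T (h i) := ⟨0, h0I, 0, h0I, 0, h0I, rfl⟩
    refine le_trans ?_ (hc i hmem)
    positivity
  have hK : 0 ≤ K := hKdef ▸ Finset.sum_nonneg fun i _ => hc0 i
  -- the two-parameter bound on the delta
  have hd : ∀ s ∈ Icc (0:ℝ) T, ∀ u ∈ Icc (0:ℝ) T, ∀ t ∈ Icc (0:ℝ) T, u ≠ t → s ≠ t →
      |g s t - g s u - g u t| ≤ K * (max |u - t| |s - t|) ^ μ := by
    intro s hs u hu t ht hut hst
    have hut' : (0:ℝ) < |u - t| := abs_pos.2 (sub_ne_zero.2 hut)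
    have hst' : (0:ℝ) < |s - t| := abs_pos.2 (sub_ne_zero.2 hst)
    have hM0 : 0 < max |u - t| |s - t| := lt_of_lt_of_le hut' (le_max_left _ _)
    have heq : g s t - g s u - g u t = ∑ i, h i s u t := by
      have hh := hdec s hs u hu t ht
      linarith [hh]
    rw [heq]
    refine (Finset.abs_sum_le_sum_abs _ _).trans ?_
    rw [hKdef, Finset.sum_mul]
    refine Finset.sum_le_sum fun i _ => ?_
    have hρi := hρ i
    have hden1 : 0 < |u - t| ^ (ρ i) := Real.rpow_pos_of_pos hut' _
    have hden2 : 0 < |s - t| ^ (μ - ρ i) := Real.rpow_pos_of_pos hst' _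
    have hmem : |h i s u t| / (|u - t| ^ (ρ i) * |s - t| ^ (μ - ρ i))
        ∈ threeParQuotSet (ρ i) (μ - ρ i) T (h i) := ⟨t, ht, u, hu, s, hs, rfl⟩
    have hq := hc i hmem
    rw [div_le_iff₀ (mul_pos hden1 hden2)] at hq
    have h2 : |u - t| ^ (ρ i) * |s - t| ^ (μ - ρ i) ≤ (max |u - t| |s - t|)^μ := by
      have e : (max |u - t| |s - t|)^μ
          = (max |u - t| |s - t|)^(ρ i) * (max |u - t| |s - t|)^(μ - ρ i) := by
        rw [← Real.rpow_add hM0]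
        ring_nf
      rw [e]
      exact mul_le_mul (Real.rpow_le_rpow (abs_nonneg _) (le_max_left _ _) hρi.1.le)
        (Real.rpow_le_rpow (abs_nonneg _) (le_max_right _ _) (by linarith [hρi.2]))
        hden2.le (Real.rpow_nonneg hM0.le _)
    exact hq.trans (mul_le_mul_of_nonneg_left h2 (hc0 i))
  -- existence of I with one-sided remainder bound
  obtain ⟨I, hIrem⟩ := sewing_exists hT hμ hK hgdiag hd
  obtain ⟨C₂, hC₂def⟩ : ∃ C₂, C₂ = K/(1-(2/3:ℝ)^(μ-1)) + 2*K := ⟨_, rfl⟩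
  rw [← hC₂def] at hIrem
  have hθ0 : 0 ≤ (2/3:ℝ)^(μ-1) := Real.rpow_nonneg (by norm_num) _
  have hθ1 : (2/3:ℝ)^(μ-1) < 1 := Real.rpow_lt_one (by norm_num) (by norm_num) (by linarith)
  have hC₂0 : 0 ≤ C₂ := by
    rw [hC₂def]
    have : 0 ≤ K/(1-(2/3:ℝ)^(μ-1)) := div_nonneg hK (by linarith)
    linarith
  obtain ⟨Cf, hCfdef⟩ : ∃ Cf, Cf = C₂ + 2*K := ⟨_, rfl⟩
  have hCf0 : 0 ≤ Cf := by rw [hCfdef]; linarith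
  -- antisymmetry bound
  have hanti : ∀ s ∈ Icc (0:ℝ) T, ∀ t ∈ Icc (0:ℝ) T, s ≠ t →
      |g s t + g t s| ≤ 2*K * |s - t|^μ := by
    intro s hs t ht hst
    have huI : (s+t)/2 ∈ Icc (0:ℝ) T := ⟨by linarith [hs.1, ht.1], by linarith [hs.2, ht.2]⟩
    have hne1 : t ≠ (s+t)/2 := fun hh => hst (by linarith [hh])
    have hne2 : s ≠ (s+t)/2 := fun hh => hst (by linarith [hh])
    have e1 : |t - (s+t)/2| = |s-t|/2 := by
      rw [show t - (s+t)/2 = -((s-t)/2) by ring, abs_neg, abs_div, abs_two]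
    have e2 : |s - (s+t)/2| = |s-t|/2 := by
      rw [show s - (s+t)/2 = (s-t)/2 by ring, abs_div, abs_two]
    have hb1 := hd s hs t ht ((s+t)/2) huI hne1 hne2
    have hb2 := hd t ht s hs ((s+t)/2) huI hne2 hne1
    rw [show max |t - (s+t)/2| |s - (s+t)/2| = |s-t|/2 by rw [e1, e2, max_self]] at hb1
    rw [show max |s - (s+t)/2| |t - (s+t)/2| = |s-t|/2 by rw [e1, e2, max_self]] at hb2
    have hsum : |g s t + g t s| ≤ K*(|s-t|/2)^μ + K*(|s-t|/2)^μ := by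
      have e : g s t + g t s
          = -((g s ((s+t)/2) - g s t - g t ((s+t)/2))
            + (g t ((s+t)/2) - g t s - g s ((s+t)/2))) := by ring
      rw [e, abs_neg]
      exact (abs_add_le _ _).trans (by linarith)
    refine hsum.trans ?_
    have hh : (|s-t|/2)^μ ≤ |s-t|^μ :=
      Real.rpow_le_rpow (by positivity) (by linarith [abs_nonneg (s-t)]) (by linarith)
    nlinarith [Real.rpow_nonneg (abs_nonneg (s-t)) μ]
  -- two-sided remainder bound
  have hrem : ∀ s ∈ Icc (0:ℝ) T, ∀ t ∈ Icc (0:ℝ) T, |g s t - (I t - I s)| ≤ Cf * |t - s|^μ := by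
    intro s hs t ht
    rcases le_or_gt s t with hst | hts
    · have h1 := hIrem s hs t ht hst
      rw [abs_of_nonneg (by linarith : (0:ℝ) ≤ t - s)]
      refine h1.trans ?_
      have hpw : 0 ≤ (t-s)^μ := Real.rpow_nonneg (by linarith) _
      rw [hCfdef]
      nlinarith
    · have h1 := hIrem t ht s hs hts.le
      have h2 := hanti s hs t ht (by intro e; rw [e] at hts; exact lt_irrefl t hts)
      have e' : g s t - (I t - I s) = (g s t + g t s) - (g t s - (I s - I t)) := by ring
      rw [e']
      refine (abs_sub _ _).trans ?_
      have e2 : |t - s| = s - t := by rw [abs_of_neg (by linarith)]; ring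
      have e3 : |s - t| = s - t := abs_of_pos (by linarith)
      rw [e2, hCfdef]
      rw [e3] at h2
      linarith
  -- continuity of I
  have hIcont : ContinuousOn I (Icc 0 T) := by
    intro s hs
    have hgs : ContinuousOn (fun t => g s t) (Icc 0 T) := by
      have hcomp : (fun t : ℝ => g s t) = (fun p : ℝ × ℝ => g p.1 p.2) ∘ (fun t => (s, t)) := rfl
      rw [hcomp]
      exact hgc.comp ((continuous_const.prodMk continuous_id).continuousOn)
        (fun x hx => ⟨hs, hx⟩)
    have hgs0 : Filter.Tendsto (fun t => g s t) (nhdsWithin s (Icc 0 T)) (nhds 0) := by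
      have hh := hgs s hs
      rwa [ContinuousWithinAt, hgdiag s hs] at hh
    have hd0 : Filter.Tendsto (fun t : ℝ => Cf * |t - s|^μ) (nhdsWithin s (Icc 0 T)) (nhds 0) := by
      have h1 : Filter.Tendsto (fun t : ℝ => |t - s|) (nhdsWithin s (Icc 0 T)) (nhds 0) := by
        have h2 : Filter.Tendsto (fun t : ℝ => t - s) (nhdsWithin s (Icc 0 T)) (nhds (s - s)) :=
          ((continuous_id.sub continuous_const).tendsto s).mono_left nhdsWithin_le_nhds
        rw [sub_self] at h2
        have := h2.abs
        rwa [abs_zero] at this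
      have h3 : Filter.Tendsto (fun x : ℝ => Cf * x^μ) (nhds 0) (nhds (Cf * (0:ℝ)^μ)) :=
        ((Real.continuousAt_rpow_const 0 μ (Or.inr (by linarith))).tendsto).const_mul _
      rw [Real.zero_rpow (by linarith : μ ≠ 0), mul_zero] at h3
      exact h3.comp h1
    have hsq : Filter.Tendsto (fun t => dist (I t) (I s)) (nhdsWithin s (Icc 0 T)) (nhds 0) := by
      have hbnd : ∀ᶠ t in nhdsWithin s (Icc 0 T),
          dist (I t) (I s) ≤ |g s t| + Cf * |t - s|^μ := by
        filter_upwards [self_mem_nhdsWithin] with t htmem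
        have h1 := hrem s hs t htmem
        rw [Real.dist_eq]
        have h2 : |I t - I s| ≤ |g s t| + |g s t - (I t - I s)| := by
          have h3 := abs_sub (g s t) (g s t - (I t - I s))
          have e : g s t - (g s t - (I t - I s)) = I t - I s := by ring
          rw [e] at h3
          exact h3
        exact h2.trans (by linarith)
      have hg0 : Filter.Tendsto (fun t => |g s t| + Cf * |t - s|^μ)
          (nhdsWithin s (Icc 0 T)) (nhds 0) := by
        have hsum := hgs0.abs.add hd0
        rwa [abs_zero, zero_add] at hsum
      exact squeeze_zero' (Filter.Eventually.of_forall fun t => dist_nonneg) hbnd hg0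
    exact tendsto_iff_dist_tendsto_zero.2 hsq
  refine ⟨I, hIcont, ⟨Cf, hrem⟩, ?_⟩
  -- uniqueness
  intro J _ hJrem
  obtain ⟨CJ, hCJ⟩ := hJrem
  refine ⟨J 0 - I 0, fun t htmem => ?_⟩
  have hf : ∀ a ∈ Icc (0:ℝ) T, ∀ b ∈ Icc (0:ℝ) T,
      |(J b - I b) - (J a - I a)| ≤ (Cf + CJ) * |b - a|^μ := by
    intro a ha b hb
    have h1 := hrem a ha b hb
    have h2 := hCJ a ha b hb
    have e : (J b - I b) - (J a - I a) = (g a b - (I b - I a)) - (g a b - (J b - J a)) := by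
      ring
    rw [e]
    refine (abs_sub _ _).trans ?_
    have e2 : (Cf + CJ) * |b - a|^μ = Cf * |b-a|^μ + CJ * |b-a|^μ := by ring
    rw [e2]
    exact add_le_add h1 h2
  have htnn : (0:ℝ) ≤ t := htmem.1
  have hkey : ∀ n : ℕ, 1 ≤ n →
      |(J t - I t) - (J 0 - I 0)| ≤ (Cf + CJ) * t^μ * ((n:ℝ))^(1-μ) := by
    intro n hn
    have hn0 : (0:ℝ) < (n:ℝ) := by exact_mod_cast hn
    have htel : (J t - I t) - (J 0 - I 0)
        = ∑ k ∈ Finset.range n,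
          ((J (((k:ℕ)+1 : ℕ)*(t/n)) - I (((k:ℕ)+1 : ℕ)*(t/n)))
            - (J ((k:ℕ)*(t/n)) - I ((k:ℕ)*(t/n)))) := by
      rw [Finset.sum_range_sub (fun k => J ((k:ℕ)*(t/n)) - I ((k:ℕ)*(t/n))) n]
      have e1 : ((n:ℕ):ℝ)*(t/n) = t := by field_simp
      have e2 : ((0:ℕ):ℝ)*(t/n) = 0 := by norm_num
      rw [e1, e2]
    have hterm : ∀ k ∈ Finset.range n,
        |(J (((k:ℕ)+1 : ℕ)*(t/n)) - I (((k:ℕ)+1 : ℕ)*(t/n)))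
          - (J ((k:ℕ)*(t/n)) - I ((k:ℕ)*(t/n)))| ≤ (Cf + CJ) * (t/n)^μ := by
      intro k hk
      have hkn : (k:ℝ)+1 ≤ (n:ℝ) := by exact_mod_cast Finset.mem_range.1 hk
      have hk0 : (0:ℝ) ≤ (k:ℝ) := Nat.cast_nonneg k
      have htn0 : 0 ≤ t/n := by positivity
      have haI : ((k:ℕ):ℝ)*(t/n) ∈ Icc (0:ℝ) T := by
        constructor
        · positivity
        · have : (k:ℝ)*(t/n) ≤ (n:ℝ)*(t/n) := by nlinarith
          have e1 : (n:ℝ)*(t/n) = t := by field_simp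
          rw [e1] at this
          exact this.trans htmem.2
      have hbI : (((k:ℕ)+1 : ℕ):ℝ)*(t/n) ∈ Icc (0:ℝ) T := by
        constructor
        · positivity
        · push_cast
          have : ((k:ℝ)+1)*(t/n) ≤ (n:ℝ)*(t/n) := by nlinarith
          have e1 : (n:ℝ)*(t/n) = t := by field_simp
          rw [e1] at this
          exact this.trans htmem.2
      have hba : |(((k:ℕ)+1 : ℕ):ℝ)*(t/n) - ((k:ℕ):ℝ)*(t/n)| = t/n := by
        push_cast
        rw [show ((k:ℝ)+1)*(t/n) - (k:ℝ)*(t/n) = t/n by ring]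
        exact abs_of_nonneg htn0
      have := hf _ haI _ hbI
      rw [hba] at this
      exact this
    have hstep1 : |(J t - I t) - (J 0 - I 0)| ≤ (n:ℝ) * ((Cf + CJ) * (t/n)^μ) := by
      rw [htel]
      refine (Finset.abs_sum_le_sum_abs _ _).trans ?_
      refine (Finset.sum_le_sum hterm).trans ?_
      rw [Finset.sum_const, Finset.card_range, nsmul_eq_mul]
    refine hstep1.trans (le_of_eq ?_)
    rw [Real.div_rpow htnn hn0.le, Real.rpow_sub hn0, Real.rpow_one]
    have hnμ : ((n:ℝ))^μ ≠ 0 := (Real.rpow_pos_of_pos hn0 _).ne'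
    field_simp
  have hlim : Filter.Tendsto (fun n : ℕ => (Cf + CJ) * t^μ * ((n:ℝ))^(1-μ))
      Filter.atTop (nhds 0) := by
    have h1 : Filter.Tendsto (fun x : ℝ => x^(1-μ)) Filter.atTop (nhds 0) := by
      have := tendsto_rpow_neg_atTop (by linarith : (0:ℝ) < μ - 1)
      rwa [neg_sub] at this
    have h2 := (h1.comp tendsto_natCast_atTop_atTop).const_mul ((Cf + CJ) * t^μ)
    rw [mul_zero] at h2
    exact h2
  have hfinal : |(J t - I t) - (J 0 - I 0)| ≤ 0 := by
    refine ge_of_tendsto hlim ?_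
    filter_upwards [Filter.eventually_ge_atTop 1] with n hn
    exact hkey n hn
  have := abs_nonpos_iff.1 hfinal
  linarith [this]
end

section
/- Let 1/3 < γ < 1/2, and let (X,𝕏) be a stochastically enhanced process such that almost surely X ∈ C^γ([0,T];ℝ^d), 𝕏 ∈ C^{2γ}([0,T]²; ℝ^{d×d}), and Chen's relation −𝕏_{u,t} + 𝕏_{s,t} − 𝕏_{s,u} = (X_u − X_s)(X_t − X_u)^⊤ holds for all s,u,t. Let Y be a real-valued process and Y' an ℝ^d-valued row-vector process such that almost surely Y, Y' are γ-Hölder continuous and R^Y_{s,t} := Y_t − Y_s − Y'_s·(X_t − X_s) satisfies ‖R^Y‖_{2γ} < ∞. Then almost surely the limit lim_{ε→0⁺} (1/ε) ∫_0^t ( Y_s (X_{s+ε} − X_s)^⊤ + Y'_s 𝕏_{s,s+ε} ) ds exists uniformly in t ∈ [0,T]. -/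
open MeasureTheory Set Filter Topology Matrix

section aux
variable {d : ℕ}

lemma aux_rpow_le_one {u γ δ : ℝ} (hu : 0 ≤ u) (hu1 : u ≤ 1) (hγ : 0 < γ) (hγδ : γ ≤ δ) :
    u ^ δ ≤ u ^ γ := by
  rcases eq_or_lt_of_le hu with h | h
  · rw [← h, Real.zero_rpow (by linarith), Real.zero_rpow (by linarith)]
  · exact Real.rpow_le_rpow_of_exponent_ge h hu1 hγδ

lemma aux_tendsto_rpow (s₀ C e : ℝ) (he : 0 < e) :
    Tendsto (fun t : ℝ => C * |t - s₀| ^ e) (𝓝 s₀) (𝓝 0) := by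
  have h1 : Tendsto (fun t : ℝ => |t - s₀|) (𝓝 s₀) (𝓝 0) := by
    have := ((continuous_id.sub (continuous_const (y := s₀))).abs).tendsto s₀
    simpa using this
  have h2 : ContinuousAt (fun u : ℝ => u ^ e) 0 :=
    Real.continuousAt_rpow_const 0 e (Or.inr he.le)
  have h3 : Tendsto (fun t : ℝ => |t - s₀| ^ e) (𝓝 s₀) (𝓝 0) := by
    have := h2.tendsto.comp h1
    simpa [Function.comp_def, Real.zero_rpow he.ne'] using this
  simpa using h3.const_mul C

lemma cont_of_mod {E : Type*} [PseudoMetricSpace E] {f : ℝ → E} {C₁ C₂ e₁ e₂ : ℝ}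
    (he₁ : 0 < e₁) (he₂ : 0 < e₂)
    (h : ∀ s t, dist (f t) (f s) ≤ C₁ * |t - s| ^ e₁ + C₂ * |t - s| ^ e₂) : Continuous f := by
  rw [continuous_iff_continuousAt]
  intro s
  rw [ContinuousAt, tendsto_iff_dist_tendsto_zero]
  have hb := (aux_tendsto_rpow s C₁ e₁ he₁).add (aux_tendsto_rpow s C₂ e₂ he₂)
  rw [add_zero] at hb
  exact squeeze_zero (fun t => dist_nonneg) (fun t => h s t) hb

lemma aux_abs_dot_le (v w : Fin d → ℝ) : |v ⬝ᵥ w| ≤ d * (‖v‖ * ‖w‖) := by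
  calc |v ⬝ᵥ w| ≤ ∑ i, |v i * w i| := Finset.abs_sum_le_sum_abs _ _
    _ ≤ ∑ _i : Fin d, ‖v‖ * ‖w‖ := by
        refine Finset.sum_le_sum fun i _ => ?_
        rw [abs_mul]
        exact mul_le_mul (norm_le_pi_norm v i) (norm_le_pi_norm w i) (abs_nonneg _) (norm_nonneg _)
    _ = d * (‖v‖ * ‖w‖) := by simp [Finset.sum_const, nsmul_eq_mul]

lemma aux_norm_vecMul_le (v : Fin d → ℝ) (M : Matrix (Fin d) (Fin d) ℝ) {B : ℝ}
    (hB : 0 ≤ B) (h : ∀ i j, |M i j| ≤ B) : ‖v ᵥ* M‖ ≤ d * ‖v‖ * B := by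
  have hnn : 0 ≤ (d : ℝ) * ‖v‖ * B := by positivity
  rw [pi_norm_le_iff_of_nonneg hnn]
  intro j
  have : ‖(v ᵥ* M) j‖ = |∑ i, v i * M i j| := by simp [Matrix.vecMul, dotProduct]
  rw [this]
  calc |∑ i, v i * M i j| ≤ ∑ i, |v i * M i j| := Finset.abs_sum_le_sum_abs _ _
    _ ≤ ∑ _i : Fin d, ‖v‖ * B := by
        refine Finset.sum_le_sum fun i _ => ?_
        rw [abs_mul]
        exact mul_le_mul (norm_le_pi_norm v i) (h i j) (abs_nonneg _) (norm_nonneg _)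
    _ = d * ‖v‖ * B := by simp [Finset.sum_const, nsmul_eq_mul]; ring

lemma aux_vecMul_vecMulVec (v a b : Fin d → ℝ) : v ᵥ* vecMulVec a b = (v ⬝ᵥ a) • b := by
  ext j; simp [Matrix.vecMul, Matrix.vecMulVec, dotProduct, Finset.sum_mul, mul_assoc]

lemma aux_clamp_lip (T a b : ℝ) : |min (max a 0) T - min (max b 0) T| ≤ |a - b| := by
  have h1 := le_abs_self (a - b); have h2 := neg_abs_le (a - b)
  rw [abs_le]
  rcases le_total a T with h | h <;> rcases le_total b T with h' | h' <;>
    rcases le_total a 0 with g | g <;> rcases le_total b 0 with g' | g' <;>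
    simp [min_def, max_def] <;> split_ifs <;> constructor <;> linarith

end aux

structure RoughData (d : ℕ) (T γ : ℝ) where
  x : ℝ → Fin d → ℝ
  xx : ℝ → ℝ → Matrix (Fin d) (Fin d) ℝ
  y : ℝ → ℝ
  y' : ℝ → Fin d → ℝ
  CX : ℝ
  CXX : ℝ
  CY : ℝ
  CY' : ℝ
  CR : ℝ
  MY : ℝ
  MY' : ℝ
  MX : ℝ
  hT : 0 < T
  hγl : 1/3 < γ
  hγu : γ < 1/2
  hCX : 0 ≤ CX
  hCXX : 0 ≤ CXX
  hCY : 0 ≤ CY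
  hCY' : 0 ≤ CY'
  hCR : 0 ≤ CR
  hMY : 0 ≤ MY
  hMY' : 0 ≤ MY'
  hMX : 0 ≤ MX
  hx : ∀ s t, ‖x t - x s‖ ≤ CX * |t - s| ^ γ
  hxx : ∀ s t i j, |xx s t i j| ≤ CXX * |t - s| ^ (2*γ)
  hchen : ∀ s u t, -xx u t + xx s t - xx s u = vecMulVec (x u - x s) (x t - x u)
  hy : ∀ s t, |y t - y s| ≤ CY * |t - s| ^ γ
  hy' : ∀ s t, ‖y' t - y' s‖ ≤ CY' * |t - s| ^ γ
  hR : ∀ s t, |y t - y s - y' s ⬝ᵥ (x t - x s)| ≤ CR * |t - s| ^ (2*γ)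
  hyb : ∀ s, |y s| ≤ MY
  hy'b : ∀ s, ‖y' s‖ ≤ MY'
  hxb : ∀ s t, ‖x t - x s‖ ≤ MX

namespace RoughData
variable {d : ℕ} {T γ : ℝ} (R : RoughData d T γ)

lemma hγ (R : RoughData d T γ) : 0 < γ := by have := R.hγl; linarith
lemma he1 (R : RoughData d T γ) : 1 < 3 * γ := by have := R.hγl; linarith

/-- first order germ -/
def Xi (s t : ℝ) : Fin d → ℝ := R.y s • (R.x t - R.x s) + R.y' s ᵥ* R.xx s t

/-- defect of additivity -/
def dXi (s u t : ℝ) : Fin d → ℝ := R.Xi s t - R.Xi s u - R.Xi u t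

def C0 : ℝ := R.MY * R.CX + d * R.MY' * R.CXX
def K3 : ℝ := R.CR * R.CX + d * R.CY' * R.CXX

lemma hC0 : 0 ≤ R.C0 := by
  unfold C0
  have h1 := R.hMY; have h2 := R.hCX; have h3 := R.hMY'; have h4 := R.hCXX
  have h5 : (0:ℝ) ≤ (d:ℝ) := Nat.cast_nonneg d
  exact add_nonneg (mul_nonneg h1 h2) (mul_nonneg (mul_nonneg h5 h3) h4)

lemma hK3 : 0 ≤ R.K3 := by
  unfold K3
  have h1 := R.hCR; have h2 := R.hCX; have h3 := R.hCY'; have h4 := R.hCXX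
  have h5 : (0:ℝ) ≤ (d:ℝ) := Nat.cast_nonneg d
  exact add_nonneg (mul_nonneg h1 h2) (mul_nonneg (mul_nonneg h5 h3) h4)

lemma norm_Xi_le {s t : ℝ} (h1 : |t - s| ≤ 1) : ‖R.Xi s t‖ ≤ R.C0 * |t - s| ^ γ := by
  have habs : (0:ℝ) ≤ |t - s| := abs_nonneg _
  have hle : |t - s| ^ (2*γ) ≤ |t - s| ^ γ :=
    aux_rpow_le_one habs h1 R.hγ (by have := R.hγ; linarith)
  have e1 : ‖R.y s • (R.x t - R.x s)‖ ≤ R.MY * R.CX * |t - s| ^ γ := by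
    rw [norm_smul]
    calc ‖R.y s‖ * ‖R.x t - R.x s‖ ≤ R.MY * (R.CX * |t - s| ^ γ) := by
          exact mul_le_mul (R.hyb s) (R.hx s t) (norm_nonneg _) R.hMY
      _ = R.MY * R.CX * |t - s| ^ γ := by ring
  have e2 : ‖R.y' s ᵥ* R.xx s t‖ ≤ d * R.MY' * R.CXX * |t - s| ^ γ := by
    have hB : (0:ℝ) ≤ R.CXX * |t - s| ^ (2*γ) :=
      mul_nonneg R.hCXX (Real.rpow_nonneg (abs_nonneg _) _)
    have := aux_norm_vecMul_le (R.y' s) (R.xx s t) hB (R.hxx s t)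
    calc ‖R.y' s ᵥ* R.xx s t‖ ≤ d * ‖R.y' s‖ * (R.CXX * |t - s| ^ (2*γ)) := this
      _ ≤ d * R.MY' * (R.CXX * |t - s| ^ γ) := by
          have h3 := R.hCXX
          have hm : (d:ℝ) * ‖R.y' s‖ ≤ d * R.MY' := by
            have := R.hy'b s; have : ‖R.y' s‖ ≤ R.MY' := this
            nlinarith [Nat.cast_nonneg (α := ℝ) d, norm_nonneg (R.y' s)]
          refine mul_le_mul hm (mul_le_mul_of_nonneg_left hle h3)
            (mul_nonneg h3 (Real.rpow_nonneg (abs_nonneg _) _))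
            (mul_nonneg (Nat.cast_nonneg d) R.hMY')
      _ = d * R.MY' * R.CXX * |t - s| ^ γ := by ring
  calc ‖R.Xi s t‖ ≤ ‖R.y s • (R.x t - R.x s)‖ + ‖R.y' s ᵥ* R.xx s t‖ := norm_add_le _ _
    _ ≤ R.MY * R.CX * |t - s| ^ γ + d * R.MY' * R.CXX * |t - s| ^ γ := add_le_add e1 e2
    _ = R.C0 * |t - s| ^ γ := by rw [C0]; ring

lemma dXi_eq (s u t : ℝ) :
    R.dXi s u t = (-(R.y u - R.y s - R.y' s ⬝ᵥ (R.x u - R.x s))) • (R.x t - R.x u)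
      + (R.y' s - R.y' u) ᵥ* R.xx u t := by
  have hc : R.xx s t = R.xx s u + R.xx u t + vecMulVec (R.x u - R.x s) (R.x t - R.x u) := by
    have := R.hchen s u t
    have h2 : R.xx s t = vecMulVec (R.x u - R.x s) (R.x t - R.x u) + R.xx u t + R.xx s u := by
      rw [← this]; abel
    rw [h2]; abel
  unfold dXi Xi
  rw [hc, Matrix.vecMul_add, Matrix.vecMul_add, aux_vecMul_vecMulVec, Matrix.sub_vecMul]
  module

lemma norm_dXi_le {s u t : ℝ} (h1 : s ≤ u) (h2 : u ≤ t) :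
    ‖R.dXi s u t‖ ≤ R.K3 * (t - s) ^ (3*γ) := by
  have hus : (0:ℝ) ≤ u - s := by linarith
  have htu : (0:ℝ) ≤ t - u := by linarith
  have hts : (0:ℝ) ≤ t - s := by linarith
  have hγ := R.hγ
  have key3 : (t - s) ^ (2*γ) * (t - s) ^ γ = (t - s) ^ (3*γ) := by
    rw [← Real.rpow_add' hts (by intro h; nlinarith)]
    ring_nf
  rw [R.dXi_eq s u t]
  have e1 : ‖(-(R.y u - R.y s - R.y' s ⬝ᵥ (R.x u - R.x s))) • (R.x t - R.x u)‖
      ≤ R.CR * R.CX * (t - s) ^ (3*γ) := by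
    rw [norm_smul, norm_neg]
    have ha : ‖R.y u - R.y s - R.y' s ⬝ᵥ (R.x u - R.x s)‖ ≤ R.CR * (t - s) ^ (2*γ) := by
      calc ‖R.y u - R.y s - R.y' s ⬝ᵥ (R.x u - R.x s)‖ ≤ R.CR * |u - s| ^ (2*γ) := R.hR s u
        _ ≤ R.CR * (t - s) ^ (2*γ) := by
            refine mul_le_mul_of_nonneg_left ?_ R.hCR
            rw [abs_of_nonneg hus]
            exact Real.rpow_le_rpow hus (by linarith) (by linarith)
    have hb : ‖R.x t - R.x u‖ ≤ R.CX * (t - s) ^ γ := by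
      calc ‖R.x t - R.x u‖ ≤ R.CX * |t - u| ^ γ := R.hx u t
        _ ≤ R.CX * (t - s) ^ γ := by
            refine mul_le_mul_of_nonneg_left ?_ R.hCX
            rw [abs_of_nonneg htu]
            exact Real.rpow_le_rpow htu (by linarith) (by linarith)
    calc ‖R.y u - R.y s - R.y' s ⬝ᵥ (R.x u - R.x s)‖ * ‖R.x t - R.x u‖
        ≤ (R.CR * (t - s) ^ (2*γ)) * (R.CX * (t - s) ^ γ) := by
          exact mul_le_mul ha hb (norm_nonneg _)
            (mul_nonneg R.hCR (Real.rpow_nonneg hts _))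
      _ = R.CR * R.CX * ((t - s) ^ (2*γ) * (t - s) ^ γ) := by ring
      _ = R.CR * R.CX * (t - s) ^ (3*γ) := by rw [key3]
  have e2 : ‖(R.y' s - R.y' u) ᵥ* R.xx u t‖ ≤ d * R.CY' * R.CXX * (t - s) ^ (3*γ) := by
    have hB : (0:ℝ) ≤ R.CXX * |t - u| ^ (2*γ) :=
      mul_nonneg R.hCXX (Real.rpow_nonneg (abs_nonneg _) _)
    have h0 := aux_norm_vecMul_le (R.y' s - R.y' u) (R.xx u t) hB (R.hxx u t)
    have ha : ‖R.y' s - R.y' u‖ ≤ R.CY' * (t - s) ^ γ := by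
      calc ‖R.y' s - R.y' u‖ = ‖R.y' u - R.y' s‖ := by rw [norm_sub_rev]
        _ ≤ R.CY' * |u - s| ^ γ := R.hy' s u
        _ ≤ R.CY' * (t - s) ^ γ := by
            refine mul_le_mul_of_nonneg_left ?_ R.hCY'
            rw [abs_of_nonneg hus]
            exact Real.rpow_le_rpow hus (by linarith) (by linarith)
    have hb : R.CXX * |t - u| ^ (2*γ) ≤ R.CXX * (t - s) ^ (2*γ) := by
      refine mul_le_mul_of_nonneg_left ?_ R.hCXX
      rw [abs_of_nonneg htu]
      exact Real.rpow_le_rpow htu (by linarith) (by linarith)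
    calc ‖(R.y' s - R.y' u) ᵥ* R.xx u t‖ ≤ d * ‖R.y' s - R.y' u‖ * (R.CXX * |t - u| ^ (2*γ)) := h0
      _ ≤ d * (R.CY' * (t - s) ^ γ) * (R.CXX * (t - s) ^ (2*γ)) := by
          refine mul_le_mul (mul_le_mul_of_nonneg_left ha (Nat.cast_nonneg d)) hb
            (mul_nonneg R.hCXX (Real.rpow_nonneg (abs_nonneg _) _))
            (mul_nonneg (Nat.cast_nonneg d) (mul_nonneg R.hCY' (Real.rpow_nonneg hts _)))
      _ = d * R.CY' * R.CXX * ((t - s) ^ (2*γ) * (t - s) ^ γ) := by ring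
      _ = d * R.CY' * R.CXX * (t - s) ^ (3*γ) := by rw [key3]
  calc ‖_ + _‖ ≤ _ := norm_add_le _ _
    _ ≤ R.CR * R.CX * (t - s) ^ (3*γ) + d * R.CY' * R.CXX * (t - s) ^ (3*γ) := add_le_add e1 e2
    _ = R.K3 * (t - s) ^ (3*γ) := by rw [K3]; ring


lemma cont_x : Continuous R.x := by
  refine cont_of_mod (C₁ := R.CX) (C₂ := 0) R.hγ R.hγ (fun s t => ?_)
  rw [dist_eq_norm]
  simpa using R.hx s t

lemma cont_y : Continuous R.y := by
  refine cont_of_mod (C₁ := R.CY) (C₂ := 0) R.hγ R.hγ (fun s t => ?_)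
  rw [Real.dist_eq]
  simpa using R.hy s t

lemma cont_y' : Continuous R.y' := by
  refine cont_of_mod (C₁ := R.CY') (C₂ := 0) R.hγ R.hγ (fun s t => ?_)
  rw [dist_eq_norm]
  simpa using R.hy' s t

lemma xxmod_left (s s' t : ℝ) (i j : Fin d) :
    |R.xx s t i j - R.xx s' t i j| ≤ R.CXX * |s - s'| ^ (2*γ) + R.CX * R.MX * |s - s'| ^ γ := by
  have hc := R.hchen s s' t
  have he : R.xx s t i j - R.xx s' t i j = R.xx s s' i j + (R.x s' - R.x s) i * (R.x t - R.x s') j := by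
    have h2 : R.xx s t = R.xx s' t + R.xx s s' + vecMulVec (R.x s' - R.x s) (R.x t - R.x s') := by
      rw [show vecMulVec (R.x s' - R.x s) (R.x t - R.x s') = -R.xx s' t + R.xx s t - R.xx s s' from hc.symm]
      abel
    rw [h2]
    simp [Matrix.add_apply, Matrix.vecMulVec_apply]
    ring
  rw [he]
  have h1 : |R.xx s s' i j| ≤ R.CXX * |s - s'| ^ (2*γ) := by
    have := R.hxx s s' i j
    rwa [abs_sub_comm s' s] at this
  have h2 : |(R.x s' - R.x s) i * (R.x t - R.x s') j| ≤ R.CX * R.MX * |s - s'| ^ γ := by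
    rw [abs_mul]
    have a1 : |(R.x s' - R.x s) i| ≤ R.CX * |s - s'| ^ γ := by
      have := norm_le_pi_norm (R.x s' - R.x s) i
      rw [Real.norm_eq_abs] at this
      calc |(R.x s' - R.x s) i| ≤ ‖R.x s' - R.x s‖ := this
        _ ≤ R.CX * |s' - s| ^ γ := R.hx s s'
        _ = R.CX * |s - s'| ^ γ := by rw [abs_sub_comm]
    have a2 : |(R.x t - R.x s') j| ≤ R.MX := by
      have := norm_le_pi_norm (R.x t - R.x s') j
      rw [Real.norm_eq_abs] at this
      exact this.trans (R.hxb s' t)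
    calc |(R.x s' - R.x s) i| * |(R.x t - R.x s') j| ≤ (R.CX * |s - s'| ^ γ) * R.MX :=
        mul_le_mul a1 a2 (abs_nonneg _) (by exact mul_nonneg R.hCX (Real.rpow_nonneg (abs_nonneg _) _))
      _ = R.CX * R.MX * |s - s'| ^ γ := by ring
  calc |R.xx s s' i j + (R.x s' - R.x s) i * (R.x t - R.x s') j|
      ≤ |R.xx s s' i j| + |(R.x s' - R.x s) i * (R.x t - R.x s') j| := abs_add_le _ _
    _ ≤ _ := add_le_add h1 h2

lemma xxmod_right (s t t' : ℝ) (i j : Fin d) :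
    |R.xx s t i j - R.xx s t' i j| ≤ R.CXX * |t - t'| ^ (2*γ) + R.CX * R.MX * |t - t'| ^ γ := by
  have hc := R.hchen s t' t
  have he : R.xx s t i j - R.xx s t' i j = R.xx t' t i j + (R.x t' - R.x s) i * (R.x t - R.x t') j := by
    have h2 : R.xx s t = R.xx s t' + R.xx t' t + vecMulVec (R.x t' - R.x s) (R.x t - R.x t') := by
      rw [show vecMulVec (R.x t' - R.x s) (R.x t - R.x t') = -R.xx t' t + R.xx s t - R.xx s t' from hc.symm]
      abel
    rw [h2]
    simp [Matrix.add_apply, Matrix.vecMulVec_apply]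
    ring
  rw [he]
  have h1 : |R.xx t' t i j| ≤ R.CXX * |t - t'| ^ (2*γ) := R.hxx t' t i j
  have h2 : |(R.x t' - R.x s) i * (R.x t - R.x t') j| ≤ R.CX * R.MX * |t - t'| ^ γ := by
    rw [abs_mul, mul_comm (R.CX) (R.MX)]
    have a1 : |(R.x t' - R.x s) i| ≤ R.MX := by
      have := norm_le_pi_norm (R.x t' - R.x s) i
      rw [Real.norm_eq_abs] at this
      exact this.trans (R.hxb s t')
    have a2 : |(R.x t - R.x t') j| ≤ R.CX * |t - t'| ^ γ := by
      have := norm_le_pi_norm (R.x t - R.x t') j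
      rw [Real.norm_eq_abs] at this
      exact this.trans (R.hx t' t)
    calc |(R.x t' - R.x s) i| * |(R.x t - R.x t') j| ≤ R.MX * (R.CX * |t - t'| ^ γ) :=
        mul_le_mul a1 a2 (abs_nonneg _) R.hMX
      _ = R.MX * R.CX * |t - t'| ^ γ := by ring
  calc |R.xx t' t i j + (R.x t' - R.x s) i * (R.x t - R.x t') j|
      ≤ |R.xx t' t i j| + |(R.x t' - R.x s) i * (R.x t - R.x t') j| := abs_add_le _ _
    _ ≤ _ := add_le_add h1 h2

lemma cont_xx_diag (h : ℝ) (i j : Fin d) : Continuous (fun r => R.xx r (r+h) i j) := by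
  have h2γ : 0 < 2*γ := by have := R.hγ; linarith
  refine cont_of_mod (C₁ := 2*R.CXX) (C₂ := 2*(R.CX * R.MX)) h2γ R.hγ (fun s t => ?_)
  rw [Real.dist_eq]
  have e1 := R.xxmod_left t s (t+h) i j
  have e2 := R.xxmod_right s (t+h) (s+h) i j
  have e3 : (t+h) - (s+h) = t - s := by ring
  rw [e3] at e2
  calc |R.xx t (t+h) i j - R.xx s (s+h) i j|
      ≤ |R.xx t (t+h) i j - R.xx s (t+h) i j| + |R.xx s (t+h) i j - R.xx s (s+h) i j| := abs_sub_le _ _ _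
    _ ≤ (R.CXX * |t - s| ^ (2*γ) + R.CX * R.MX * |t - s| ^ γ)
        + (R.CXX * |t - s| ^ (2*γ) + R.CX * R.MX * |t - s| ^ γ) := add_le_add e1 e2
    _ = 2*R.CXX * |t - s| ^ (2*γ) + 2*(R.CX * R.MX) * |t - s| ^ γ := by ring

lemma cont_xx_right (t₀ : ℝ) (i j : Fin d) : Continuous (fun r => R.xx t₀ r i j) := by
  have h2γ : 0 < 2*γ := by have := R.hγ; linarith
  refine cont_of_mod (C₁ := R.CXX) (C₂ := R.CX * R.MX) h2γ R.hγ (fun s t => ?_)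
  rw [Real.dist_eq]
  exact R.xxmod_right t₀ t s i j

lemma cont_vecMul {f : ℝ → Fin d → ℝ} {M : ℝ → Matrix (Fin d) (Fin d) ℝ}
    (hf : Continuous f) (hM : ∀ i j, Continuous (fun r => M r i j)) :
    Continuous (fun r => f r ᵥ* M r) := by
  have : (fun r => f r ᵥ* M r) = fun r => (fun j => ∑ i, f r i * M r i j) := by
    funext r j
    simp [Matrix.vecMul, dotProduct]
  rw [this]
  refine continuous_pi (fun j => ?_)
  refine continuous_finset_sum _ (fun i _ => ?_)
  exact ((continuous_apply i).comp hf).mul (hM i j)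

lemma cont_Xi_diag (h : ℝ) : Continuous (fun r => R.Xi r (r+h)) := by
  unfold Xi
  refine Continuous.add ?_ ?_
  · exact R.cont_y.smul ((R.cont_x.comp (continuous_id.add continuous_const)).sub R.cont_x)
  · exact cont_vecMul R.cont_y' (fun i j => R.cont_xx_diag h i j)

lemma cont_Xi_left (t₀ : ℝ) : Continuous (fun r => R.Xi t₀ r) := by
  unfold Xi
  refine Continuous.add ?_ ?_
  · exact (continuous_const (y := R.y t₀)).smul (R.cont_x.sub continuous_const)
  · exact cont_vecMul continuous_const (fun i j => R.cont_xx_right t₀ i j)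

lemma intg1 (h a b : ℝ) : IntervalIntegrable (fun r => R.Xi r (r+h)) volume a b :=
  (R.cont_Xi_diag h).intervalIntegrable a b

lemma intg2 (t₀ a b : ℝ) : IntervalIntegrable (fun r => R.Xi t₀ r) volume a b :=
  (R.cont_Xi_left t₀).intervalIntegrable a b

lemma cont_shift (b c : ℝ) : Continuous (fun r => R.Xi (r+b) (r+b+c)) := by
  have : (fun r => R.Xi (r+b) (r+b+c)) = (fun u => R.Xi u (u+c)) ∘ (fun r => r+b) := rfl
  rw [this]
  exact (R.cont_Xi_diag c).comp (continuous_id.add continuous_const)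

lemma intg3 (b c a₁ a₂ : ℝ) : IntervalIntegrable (fun r => R.Xi (r+b) (r+b+c)) volume a₁ a₂ :=
  (R.cont_shift b c).intervalIntegrable a₁ a₂

lemma cont_Xi_leftshift (t₀ c : ℝ) : Continuous (fun r => R.Xi t₀ (r+c)) :=
  (R.cont_Xi_left t₀).comp (continuous_id.add continuous_const)

lemma intg4 (t₀ c a₁ a₂ : ℝ) : IntervalIntegrable (fun r => R.Xi t₀ (r+c)) volume a₁ a₂ :=
  (R.cont_Xi_leftshift t₀ c).intervalIntegrable a₁ a₂

lemma intgd1 (b c a₁ a₂ : ℝ) :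
    IntervalIntegrable (fun r => R.dXi r (r+b) (r+(b+c))) volume a₁ a₂ := by
  have hc : Continuous (fun r => R.dXi r (r+b) (r+(b+c))) := by
    unfold dXi
    have h3 : Continuous (fun r => R.Xi (r+b) (r+(b+c))) := by
      have : (fun r => R.Xi (r+b) (r+(b+c))) = fun r => R.Xi (r+b) (r+b+c) := by
        funext r; rw [add_assoc]
      rw [this]; exact R.cont_shift b c
    exact ((R.cont_Xi_diag (b+c)).sub (R.cont_Xi_diag b)).sub h3
  exact hc.intervalIntegrable a₁ a₂

lemma intgd2 (t₀ c a₁ a₂ : ℝ) :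
    IntervalIntegrable (fun r => R.dXi t₀ r (r+c)) volume a₁ a₂ := by
  have hc : Continuous (fun r => R.dXi t₀ r (r+c)) := by
    unfold dXi
    exact ((R.cont_Xi_leftshift t₀ c).sub (R.cont_Xi_left t₀)).sub (R.cont_Xi_diag c)
  exact hc.intervalIntegrable a₁ a₂

/-- the corrected integral functional -/
noncomputable def F (h t : ℝ) : Fin d → ℝ :=
  (∫ r in (0:ℝ)..t, R.Xi r (r+h)) - (∫ r in t..(t+h), R.Xi t r) + (∫ r in (0:ℝ)..h, R.Xi 0 r)

lemma F_split_eq (b c t : ℝ) :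
    R.F (b+c) t - R.F b t - R.F c t
      = (∫ r in (0:ℝ)..t, R.dXi r (r+b) (r+(b+c)))
        - (∫ r in t..(t+b), R.dXi t r (r+c))
        + (∫ r in (0:ℝ)..b, R.dXi 0 r (r+c)) := by
  have h₁ : (∫ r in (0:ℝ)..t, R.Xi r (r+(b+c)))
      = (∫ r in (0:ℝ)..t, R.Xi r (r+b)) + ((∫ r in (0:ℝ)..t, R.Xi (r+b) (r+b+c))
        + (∫ r in (0:ℝ)..t, R.dXi r (r+b) (r+(b+c)))) := by
    rw [← intervalIntegral.integral_add (R.intg3 b c 0 t) (R.intgd1 b c 0 t),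
      ← intervalIntegral.integral_add (R.intg1 b 0 t) ((R.intg3 b c 0 t).add (R.intgd1 b c 0 t))]
    refine intervalIntegral.integral_congr (fun r _ => ?_)
    show R.Xi r (r+(b+c)) = R.Xi r (r+b) + (R.Xi (r+b) (r+b+c) + R.dXi r (r+b) (r+(b+c)))
    unfold dXi
    rw [← add_assoc r b c]
    abel
  have h₂ : (∫ r in (0:ℝ)..t, R.Xi (r+b) (r+b+c)) = ∫ r in b..(t+b), R.Xi r (r+c) := by
    have := intervalIntegral.integral_comp_add_right (a := (0:ℝ)) (b := t)
      (fun u => R.Xi u (u+c)) b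
    simpa using this
  have h₃ : (∫ r in b..(t+b), R.Xi r (r+c))
      = ((∫ r in (0:ℝ)..t, R.Xi r (r+c)) + (∫ r in t..(t+b), R.Xi r (r+c)))
        - (∫ r in (0:ℝ)..b, R.Xi r (r+c)) := by
    have A := intervalIntegral.integral_add_adjacent_intervals (R.intg1 c 0 b) (R.intg1 c b (t+b))
    have B := intervalIntegral.integral_add_adjacent_intervals (R.intg1 c 0 t) (R.intg1 c t (t+b))
    rw [eq_sub_of_add_eq' A, B]
  have h₄ : (∫ r in t..(t+b), R.Xi r (r+c))
      = (∫ r in t..(t+b), R.Xi t (r+c)) - (∫ r in t..(t+b), R.Xi t r)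
        - (∫ r in t..(t+b), R.dXi t r (r+c)) := by
    rw [← intervalIntegral.integral_sub (R.intg4 t c t (t+b)) (R.intg2 t t (t+b)),
      ← intervalIntegral.integral_sub ((R.intg4 t c t (t+b)).sub (R.intg2 t t (t+b)))
        (R.intgd2 t c t (t+b))]
    refine intervalIntegral.integral_congr (fun r _ => ?_)
    show R.Xi r (r+c) = R.Xi t (r+c) - R.Xi t r - R.dXi t r (r+c)
    unfold dXi; abel
  have h₅ : (∫ r in t..(t+b), R.Xi t (r+c)) = ∫ r in (t+c)..(t+b+c), R.Xi t r := by
    have := intervalIntegral.integral_comp_add_right (a := t) (b := t+b) (fun u => R.Xi t u) c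
    simpa using this
  have h₆ : (∫ r in (t+c)..(t+b+c), R.Xi t r)
      = (∫ r in t..(t+(b+c)), R.Xi t r) - (∫ r in t..(t+c), R.Xi t r) := by
    have A := intervalIntegral.integral_add_adjacent_intervals (R.intg2 t t (t+c)) (R.intg2 t (t+c) (t+b+c))
    rw [eq_sub_of_add_eq' A, add_assoc t b c]
  have h₇ : (∫ r in (0:ℝ)..b, R.Xi r (r+c))
      = (∫ r in (0:ℝ)..b, R.Xi 0 (r+c)) - (∫ r in (0:ℝ)..b, R.Xi 0 r)
        - (∫ r in (0:ℝ)..b, R.dXi 0 r (r+c)) := by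
    rw [← intervalIntegral.integral_sub (R.intg4 0 c 0 b) (R.intg2 0 0 b),
      ← intervalIntegral.integral_sub ((R.intg4 0 c 0 b).sub (R.intg2 0 0 b))
        (R.intgd2 0 c 0 b)]
    refine intervalIntegral.integral_congr (fun r _ => ?_)
    show R.Xi r (r+c) = R.Xi 0 (r+c) - R.Xi 0 r - R.dXi 0 r (r+c)
    unfold dXi; abel
  have h₈ : (∫ r in (0:ℝ)..b, R.Xi 0 (r+c)) = ∫ r in c..(b+c), R.Xi 0 r := by
    have := intervalIntegral.integral_comp_add_right (a := (0:ℝ)) (b := b) (fun u => R.Xi 0 u) c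
    simpa using this
  have h₉ : (∫ r in c..(b+c), R.Xi 0 r)
      = (∫ r in (0:ℝ)..(b+c), R.Xi 0 r) - (∫ r in (0:ℝ)..c, R.Xi 0 r) := by
    have A := intervalIntegral.integral_add_adjacent_intervals (R.intg2 0 0 c) (R.intg2 0 c (b+c))
    rw [eq_sub_of_add_eq' A]
  show ((∫ r in (0:ℝ)..t, R.Xi r (r+(b+c))) - (∫ r in t..(t+(b+c)), R.Xi t r)
        + (∫ r in (0:ℝ)..(b+c), R.Xi 0 r))
      - ((∫ r in (0:ℝ)..t, R.Xi r (r+b)) - (∫ r in t..(t+b), R.Xi t r)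
        + (∫ r in (0:ℝ)..b, R.Xi 0 r))
      - ((∫ r in (0:ℝ)..t, R.Xi r (r+c)) - (∫ r in t..(t+c), R.Xi t r)
        + (∫ r in (0:ℝ)..c, R.Xi 0 r)) = _
  rw [h₁, h₂, h₃, h₄, h₅, h₆, h₇, h₈, h₉]
  abel
def K4 : ℝ := (T+2) * R.K3

lemma hK4 : 0 ≤ R.K4 := mul_nonneg (by have := R.hT; linarith) R.hK3

lemma F_split_norm {b c t : ℝ} (hb : 0 < b) (hc : 0 < c) (hbc : b + c ≤ 1)
    (ht0 : 0 ≤ t) (htT : t ≤ T) :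
    ‖R.F (b+c) t - R.F b t - R.F c t‖ ≤ R.K4 * (b+c) ^ (3*γ) := by
  have hK3 := R.hK3
  have hbc0 : (0:ℝ) ≤ b + c := by linarith
  have hC : (0:ℝ) ≤ R.K3 * (b+c) ^ (3*γ) := mul_nonneg hK3 (Real.rpow_nonneg hbc0 _)
  have e1 : ‖∫ r in (0:ℝ)..t, R.dXi r (r+b) (r+(b+c))‖ ≤ R.K3 * (b+c) ^ (3*γ) * T := by
    have := intervalIntegral.norm_integral_le_of_norm_le_const
      (C := R.K3 * (b+c) ^ (3*γ)) (f := fun r => R.dXi r (r+b) (r+(b+c))) (a := 0) (b := t)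
      (fun r _ => by
        have h := R.norm_dXi_le (s := r) (u := r+b) (t := r+(b+c)) (by linarith) (by linarith)
        simpa using h)
    calc ‖∫ r in (0:ℝ)..t, R.dXi r (r+b) (r+(b+c))‖ ≤ R.K3 * (b+c) ^ (3*γ) * |t - 0| := this
      _ ≤ R.K3 * (b+c) ^ (3*γ) * T := by
          rw [sub_zero, abs_of_nonneg ht0]
          exact mul_le_mul_of_nonneg_left htT hC
  have e2 : ‖∫ r in t..(t+b), R.dXi t r (r+c)‖ ≤ R.K3 * (b+c) ^ (3*γ) * 1 := by
    have hb1 : b ≤ 1 := by linarith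
    have := intervalIntegral.norm_integral_le_of_norm_le_const
      (C := R.K3 * (b+c) ^ (3*γ)) (f := fun r => R.dXi t r (r+c)) (a := t) (b := t+b)
      (fun r hr => by
        rw [Set.uIoc_of_le (by linarith : t ≤ t+b)] at hr
        have h := R.norm_dXi_le (s := t) (u := r) (t := r+c) (le_of_lt hr.1) (by linarith)
        calc ‖R.dXi t r (r+c)‖ ≤ R.K3 * (r+c-t) ^ (3*γ) := h
          _ ≤ R.K3 * (b+c) ^ (3*γ) := by
              refine mul_le_mul_of_nonneg_left ?_ hK3
              refine Real.rpow_le_rpow (by linarith [hr.1]) ?_ (by have := R.hγ; linarith)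
              have := hr.2; linarith)
    calc ‖∫ r in t..(t+b), R.dXi t r (r+c)‖ ≤ R.K3 * (b+c) ^ (3*γ) * |t+b - t| := this
      _ ≤ R.K3 * (b+c) ^ (3*γ) * 1 := by
          rw [show t+b-t = b by ring, abs_of_nonneg hb.le]
          exact mul_le_mul_of_nonneg_left hb1 hC
  have e3 : ‖∫ r in (0:ℝ)..b, R.dXi 0 r (r+c)‖ ≤ R.K3 * (b+c) ^ (3*γ) * 1 := by
    have hb1 : b ≤ 1 := by linarith
    have := intervalIntegral.norm_integral_le_of_norm_le_const
      (C := R.K3 * (b+c) ^ (3*γ)) (f := fun r => R.dXi 0 r (r+c)) (a := 0) (b := b)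
      (fun r hr => by
        rw [Set.uIoc_of_le (by linarith : (0:ℝ) ≤ b)] at hr
        have h := R.norm_dXi_le (s := 0) (u := r) (t := r+c) (le_of_lt hr.1) (by linarith)
        calc ‖R.dXi 0 r (r+c)‖ ≤ R.K3 * (r+c-0) ^ (3*γ) := h
          _ ≤ R.K3 * (b+c) ^ (3*γ) := by
              refine mul_le_mul_of_nonneg_left ?_ hK3
              refine Real.rpow_le_rpow (by linarith [hr.1]) ?_ (by have := R.hγ; linarith)
              have := hr.2; linarith)
    calc ‖∫ r in (0:ℝ)..b, R.dXi 0 r (r+c)‖ ≤ R.K3 * (b+c) ^ (3*γ) * |b - 0| := this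
      _ ≤ R.K3 * (b+c) ^ (3*γ) * 1 := by
          rw [sub_zero, abs_of_nonneg hb.le]
          exact mul_le_mul_of_nonneg_left hb1 hC
  rw [R.F_split_eq b c t]
  calc ‖_ - _ + _‖ ≤ ‖(∫ r in (0:ℝ)..t, R.dXi r (r+b) (r+(b+c))) - (∫ r in t..(t+b), R.dXi t r (r+c))‖
        + ‖∫ r in (0:ℝ)..b, R.dXi 0 r (r+c)‖ := norm_add_le _ _
    _ ≤ ‖∫ r in (0:ℝ)..t, R.dXi r (r+b) (r+(b+c))‖ + ‖∫ r in t..(t+b), R.dXi t r (r+c)‖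
        + ‖∫ r in (0:ℝ)..b, R.dXi 0 r (r+c)‖ := by
          gcongr
          exact norm_sub_le _ _
    _ ≤ R.K3 * (b+c) ^ (3*γ) * T + R.K3 * (b+c) ^ (3*γ) * 1 + R.K3 * (b+c) ^ (3*γ) * 1 := by
          exact add_le_add (add_le_add e1 e2) e3
    _ = R.K4 * (b+c) ^ (3*γ) := by rw [K4]; ring
def C1 : ℝ := (T+2) * R.C0

lemma hC1 : 0 ≤ R.C1 := mul_nonneg (by have := R.hT; linarith) R.hC0

lemma norm_F_le {h t : ℝ} (hh : 0 < h) (h1 : h ≤ 1) (ht0 : 0 ≤ t) (htT : t ≤ T) :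
    ‖R.F h t‖ ≤ R.C1 * h ^ γ := by
  have hC0 := R.hC0
  have hγ := R.hγ
  have hCnn : (0:ℝ) ≤ R.C0 * h ^ γ := mul_nonneg hC0 (Real.rpow_nonneg hh.le _)
  have e1 : ‖∫ r in (0:ℝ)..t, R.Xi r (r+h)‖ ≤ R.C0 * h ^ γ * T := by
    have := intervalIntegral.norm_integral_le_of_norm_le_const
      (C := R.C0 * h ^ γ) (f := fun r => R.Xi r (r+h)) (a := 0) (b := t)
      (fun r _ => by
        have : |r + h - r| = h := by rw [add_sub_cancel_left, abs_of_pos hh]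
        have h2 := R.norm_Xi_le (s := r) (t := r+h) (by rw [this]; exact h1)
        rwa [this] at h2)
    calc ‖∫ r in (0:ℝ)..t, R.Xi r (r+h)‖ ≤ R.C0 * h ^ γ * |t - 0| := this
      _ ≤ R.C0 * h ^ γ * T := by
          rw [sub_zero, abs_of_nonneg ht0]; exact mul_le_mul_of_nonneg_left htT hCnn
  have e2 : ‖∫ r in t..(t+h), R.Xi t r‖ ≤ R.C0 * h ^ γ * 1 := by
    have := intervalIntegral.norm_integral_le_of_norm_le_const
      (C := R.C0 * h ^ γ) (f := fun r => R.Xi t r) (a := t) (b := t+h)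
      (fun r hr => by
        rw [Set.uIoc_of_le (by linarith : t ≤ t+h)] at hr
        have habs : |r - t| ≤ h := by rw [abs_of_pos (by linarith [hr.1])]; linarith [hr.2]
        have h2 := R.norm_Xi_le (s := t) (t := r) (le_trans habs h1)
        calc ‖R.Xi t r‖ ≤ R.C0 * |r - t| ^ γ := h2
          _ ≤ R.C0 * h ^ γ := mul_le_mul_of_nonneg_left
              (Real.rpow_le_rpow (abs_nonneg _) habs hγ.le) hC0)
    calc ‖∫ r in t..(t+h), R.Xi t r‖ ≤ R.C0 * h ^ γ * |t + h - t| := this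
      _ ≤ R.C0 * h ^ γ * 1 := by
          rw [show t+h-t = h by ring, abs_of_pos hh]
          exact mul_le_mul_of_nonneg_left h1 hCnn
  have e3 : ‖∫ r in (0:ℝ)..h, R.Xi 0 r‖ ≤ R.C0 * h ^ γ * 1 := by
    have := intervalIntegral.norm_integral_le_of_norm_le_const
      (C := R.C0 * h ^ γ) (f := fun r => R.Xi 0 r) (a := 0) (b := h)
      (fun r hr => by
        rw [Set.uIoc_of_le (by linarith : (0:ℝ) ≤ h)] at hr
        have habs : |r - 0| ≤ h := by rw [sub_zero, abs_of_pos hr.1]; exact hr.2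
        have h2 := R.norm_Xi_le (s := 0) (t := r) (le_trans habs h1)
        calc ‖R.Xi 0 r‖ ≤ R.C0 * |r - 0| ^ γ := h2
          _ ≤ R.C0 * h ^ γ := mul_le_mul_of_nonneg_left
              (Real.rpow_le_rpow (abs_nonneg _) habs hγ.le) hC0)
    calc ‖∫ r in (0:ℝ)..h, R.Xi 0 r‖ ≤ R.C0 * h ^ γ * |h - 0| := this
      _ ≤ R.C0 * h ^ γ * 1 := by
          rw [sub_zero, abs_of_pos hh]
          exact mul_le_mul_of_nonneg_left h1 hCnn
  calc ‖R.F h t‖ ≤ ‖(∫ r in (0:ℝ)..t, R.Xi r (r+h)) - (∫ r in t..(t+h), R.Xi t r)‖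
        + ‖∫ r in (0:ℝ)..h, R.Xi 0 r‖ := norm_add_le _ _
    _ ≤ ‖∫ r in (0:ℝ)..t, R.Xi r (r+h)‖ + ‖∫ r in t..(t+h), R.Xi t r‖
        + ‖∫ r in (0:ℝ)..h, R.Xi 0 r‖ := by gcongr; exact norm_sub_le _ _
    _ ≤ R.C0 * h ^ γ * T + R.C0 * h ^ γ * 1 + R.C0 * h ^ γ * 1 :=
        add_le_add (add_le_add e1 e2) e3
    _ = R.C1 * h ^ γ := by rw [C1]; ring
noncomputable def K5 : ℝ := R.K4 * (1 - (2/3 : ℝ) ^ (3*γ - 1))⁻¹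

lemma th_pos (γ : ℝ) : (0:ℝ) < (2/3 : ℝ) ^ (3*γ - 1) := Real.rpow_pos_of_pos (by norm_num) _

lemma th_lt_one (R : RoughData d T γ) : (2/3 : ℝ) ^ (3*γ - 1) < 1 :=
  Real.rpow_lt_one (by norm_num) (by norm_num) (by have := R.he1; linarith)

lemma hMge (R : RoughData d T γ) : 1 ≤ (1 - (2/3 : ℝ) ^ (3*γ - 1))⁻¹ := by
  have h1 : (0:ℝ) < (2/3 : ℝ) ^ (3*γ - 1) := Real.rpow_pos_of_pos (by norm_num) _
  have h2 := R.th_lt_one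
  have h3 : (0:ℝ) < 1 - (2/3 : ℝ) ^ (3*γ - 1) := by linarith
  rw [le_inv_comm₀ one_pos h3]
  simp only [inv_one]
  linarith

lemma hK5 : 0 ≤ R.K5 := by
  have := R.hK4
  have h := R.hMge
  rw [K5]
  exact mul_nonneg this (by linarith)

lemma rpow_split (R : RoughData d T γ) (e : ℝ) (m : ℕ) (hm : 1 ≤ m) : (m:ℝ) ^ e = (m:ℝ) ^ (e-1) * m := by
  have hm0 : (m:ℝ) ≠ 0 := by positivity
  rw [← Real.rpow_add_one hm0 (e-1), sub_add_cancel]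

lemma F_nsplit : ∀ n : ℕ, ∀ u : ℝ, 1 ≤ n → 0 < u → (n:ℝ)*u ≤ 1 → ∀ t, 0 ≤ t → t ≤ T →
    ‖R.F ((n:ℝ)*u) t - n • R.F u t‖ ≤ R.K5 * ((n:ℝ)*u) ^ (3*γ) := by
  intro n
  induction n using Nat.strong_induction_on with
  | _ n IH =>
    intro u hn hu hnu t ht0 htT
    have hγ := R.hγ
    have hK4 := R.hK4
    have hK5 := R.hK5
    rcases eq_or_lt_of_le hn with h1 | h2
    · -- n = 1
      rw [← h1]
      push_cast
      rw [one_mul, one_smul, sub_self, norm_zero]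
      exact mul_nonneg hK5 (Real.rpow_nonneg hu.le _)
    · -- 2 ≤ n
      set p : ℕ := (n+1)/2 with hp
      set q : ℕ := n - p with hq
      have hpq : p + q = n := by omega
      have hp1 : 1 ≤ p := by omega
      have hq1 : 1 ≤ q := by omega
      have hpn : p < n := by omega
      have hqn : q < n := by omega
      have hqp : q ≤ p := by omega
      have h3p : 3*p ≤ 2*n := by omega
      have hpu : 0 < (p:ℝ)*u := by positivity
      have hqu : 0 < (q:ℝ)*u := by positivity
      have hsum : (p:ℝ)*u + (q:ℝ)*u = (n:ℝ)*u := by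
        have : ((p:ℝ) + (q:ℝ)) = (n:ℝ) := by exact_mod_cast congrArg (Nat.cast : ℕ → ℝ) hpq
        nlinarith [this]
      have hpnu : (p:ℝ)*u ≤ (n:ℝ)*u := by
        have : (p:ℝ) ≤ (n:ℝ) := by exact_mod_cast hpn.le
        nlinarith
      have hqnu : (q:ℝ)*u ≤ (n:ℝ)*u := by
        have : (q:ℝ) ≤ (n:ℝ) := by exact_mod_cast hqn.le
        nlinarith
      have hsplit : ‖R.F ((p:ℝ)*u + (q:ℝ)*u) t - R.F ((p:ℝ)*u) t - R.F ((q:ℝ)*u) t‖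
          ≤ R.K4 * ((p:ℝ)*u + (q:ℝ)*u) ^ (3*γ) :=
        R.F_split_norm hpu hqu (by rw [hsum]; exact hnu) ht0 htT
      rw [hsum] at hsplit
      have hIHp := IH p hpn u hp1 hu (le_trans hpnu hnu) t ht0 htT
      have hIHq := IH q hqn u hq1 hu (le_trans hqnu hnu) t ht0 htT
      have hdecomp : R.F ((n:ℝ)*u) t - n • R.F u t
          = (R.F ((n:ℝ)*u) t - R.F ((p:ℝ)*u) t - R.F ((q:ℝ)*u) t)
            + (R.F ((p:ℝ)*u) t - p • R.F u t) + (R.F ((q:ℝ)*u) t - q • R.F u t) := by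
        have : n • R.F u t = p • R.F u t + q • R.F u t := by
          rw [← hpq, add_nsmul]
        rw [this]; abel
      -- numeric bound
      have hne : (0:ℝ) < 3*γ - 1 := by have := R.he1; linarith
      have hkey : ((p:ℝ)*u) ^ (3*γ) + ((q:ℝ)*u) ^ (3*γ)
          ≤ (2/3 : ℝ) ^ (3*γ - 1) * ((n:ℝ)*u) ^ (3*γ) := by
        have hu0 : (0:ℝ) ≤ u := hu.le
        have hp0 : (0:ℝ) ≤ (p:ℝ) := Nat.cast_nonneg p
        have hq0 : (0:ℝ) ≤ (q:ℝ) := Nat.cast_nonneg q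
        have hn0 : (0:ℝ) ≤ (n:ℝ) := Nat.cast_nonneg n
        rw [Real.mul_rpow hp0 hu0, Real.mul_rpow hq0 hu0, Real.mul_rpow hn0 hu0]
        have hmain : (p:ℝ) ^ (3*γ) + (q:ℝ) ^ (3*γ)
            ≤ (2/3 : ℝ) ^ (3*γ - 1) * (n:ℝ) ^ (3*γ) := by
          have e1 : (p:ℝ) ^ (3*γ) = (p:ℝ) ^ (3*γ-1) * p := R.rpow_split (3*γ) p hp1
          have e2 : (q:ℝ) ^ (3*γ) = (q:ℝ) ^ (3*γ-1) * q := R.rpow_split (3*γ) q hq1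
          have e3 : (n:ℝ) ^ (3*γ) = (n:ℝ) ^ (3*γ-1) * n := R.rpow_split (3*γ) n hn
          have hqple : (q:ℝ) ^ (3*γ-1) ≤ (p:ℝ) ^ (3*γ-1) :=
            Real.rpow_le_rpow hq0 (by exact_mod_cast hqp) hne.le
          have hple : (p:ℝ) ^ (3*γ-1) ≤ (2/3 : ℝ) ^ (3*γ-1) * (n:ℝ) ^ (3*γ-1) := by
            rw [← Real.mul_rpow (by norm_num) hn0]
            refine Real.rpow_le_rpow hp0 ?_ hne.le
            have : (p:ℝ) ≤ (n:ℝ) * 2 / 3 := by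
              have : (3*p : ℝ) ≤ (2*n : ℝ) := by exact_mod_cast h3p
              linarith
            linarith
          have hpqsum : ((p:ℝ) + (q:ℝ)) = (n:ℝ) := by exact_mod_cast congrArg (Nat.cast : ℕ → ℝ) hpq
          calc (p:ℝ) ^ (3*γ) + (q:ℝ) ^ (3*γ) = (p:ℝ) ^ (3*γ-1) * p + (q:ℝ) ^ (3*γ-1) * q := by
                rw [e1, e2]
            _ ≤ (p:ℝ) ^ (3*γ-1) * p + (p:ℝ) ^ (3*γ-1) * q := by
                have : (q:ℝ) ^ (3*γ-1) * q ≤ (p:ℝ) ^ (3*γ-1) * q :=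
                  mul_le_mul_of_nonneg_right hqple hq0
                linarith
            _ = (p:ℝ) ^ (3*γ-1) * n := by rw [← hpqsum]; ring
            _ ≤ ((2/3 : ℝ) ^ (3*γ-1) * (n:ℝ) ^ (3*γ-1)) * n :=
                mul_le_mul_of_nonneg_right hple hn0
            _ = (2/3 : ℝ) ^ (3*γ - 1) * (n:ℝ) ^ (3*γ) := by rw [e3]; ring
        calc (p:ℝ) ^ (3*γ) * u ^ (3*γ) + (q:ℝ) ^ (3*γ) * u ^ (3*γ)
            = ((p:ℝ) ^ (3*γ) + (q:ℝ) ^ (3*γ)) * u ^ (3*γ) := by ring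
          _ ≤ ((2/3 : ℝ) ^ (3*γ - 1) * (n:ℝ) ^ (3*γ)) * u ^ (3*γ) :=
              mul_le_mul_of_nonneg_right hmain (Real.rpow_nonneg hu0 _)
          _ = (2/3 : ℝ) ^ (3*γ - 1) * ((n:ℝ) ^ (3*γ) * u ^ (3*γ)) := by ring
      -- combine
      have hMeq : R.K4 + R.K5 * ((2/3 : ℝ) ^ (3*γ - 1)) = R.K5 := by
        rw [K5]
        have h2 := R.th_lt_one
        have hne' : 1 - (2/3 : ℝ) ^ (3*γ - 1) ≠ 0 := by linarith
        field_simp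
        ring
      calc ‖R.F ((n:ℝ)*u) t - n • R.F u t‖
          ≤ ‖R.F ((n:ℝ)*u) t - R.F ((p:ℝ)*u) t - R.F ((q:ℝ)*u) t‖
            + ‖R.F ((p:ℝ)*u) t - p • R.F u t‖ + ‖R.F ((q:ℝ)*u) t - q • R.F u t‖ := by
            rw [hdecomp]
            exact le_trans (norm_add_le _ _) (by gcongr; exact norm_add_le _ _)
        _ ≤ R.K4 * ((n:ℝ)*u) ^ (3*γ) + R.K5 * ((p:ℝ)*u) ^ (3*γ) + R.K5 * ((q:ℝ)*u) ^ (3*γ) :=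
            add_le_add (add_le_add hsplit hIHp) hIHq
        _ ≤ R.K4 * ((n:ℝ)*u) ^ (3*γ) + R.K5 * ((2/3 : ℝ) ^ (3*γ - 1) * ((n:ℝ)*u) ^ (3*γ)) := by
            have : R.K5 * ((p:ℝ)*u) ^ (3*γ) + R.K5 * ((q:ℝ)*u) ^ (3*γ)
                = R.K5 * (((p:ℝ)*u) ^ (3*γ) + ((q:ℝ)*u) ^ (3*γ)) := by ring
            rw [add_assoc, this]
            exact add_le_add (le_refl _) (mul_le_mul_of_nonneg_left hkey hK5)
        _ = (R.K4 + R.K5 * ((2/3 : ℝ) ^ (3*γ - 1))) * ((n:ℝ)*u) ^ (3*γ) := by ring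
        _ = R.K5 * ((n:ℝ)*u) ^ (3*γ) := by rw [hMeq]
noncomputable def psi (h t : ℝ) : Fin d → ℝ := (1/h) • ∫ r in (0:ℝ)..t, R.Xi r (r+h)

lemma normAt_le (t : ℝ) {h : ℝ} (hh : 0 < h) (h1 : h ≤ 1) :
    ‖∫ r in t..(t+h), R.Xi t r‖ ≤ R.C0 * h ^ γ * h := by
  have hC0 := R.hC0
  have hγ := R.hγ
  have := intervalIntegral.norm_integral_le_of_norm_le_const
    (C := R.C0 * h ^ γ) (f := fun r => R.Xi t r) (a := t) (b := t+h)
    (fun r hr => by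
      rw [Set.uIoc_of_le (by linarith : t ≤ t+h)] at hr
      have habs : |r - t| ≤ h := by rw [abs_of_pos (by linarith [hr.1])]; linarith [hr.2]
      have h2 := R.norm_Xi_le (s := t) (t := r) (le_trans habs h1)
      calc ‖R.Xi t r‖ ≤ R.C0 * |r - t| ^ γ := h2
        _ ≤ R.C0 * h ^ γ := mul_le_mul_of_nonneg_left
            (Real.rpow_le_rpow (abs_nonneg _) habs hγ.le) hC0)
  calc ‖∫ r in t..(t+h), R.Xi t r‖ ≤ R.C0 * h ^ γ * |t + h - t| := this
    _ = R.C0 * h ^ γ * h := by rw [show t+h-t = h by ring, abs_of_pos hh]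

lemma psi_sub_F {h t : ℝ} (hh : 0 < h) (h1 : h ≤ 1) :
    ‖R.psi h t - (1/h) • R.F h t‖ ≤ 2 * R.C0 * h ^ γ := by
  have hid : R.psi h t - (1/h) • R.F h t
      = (1/h) • ((∫ r in t..(t+h), R.Xi t r) - ∫ r in (0:ℝ)..h, R.Xi 0 r) := by
    unfold psi F
    module
  have hA0 : ‖∫ r in (0:ℝ)..h, R.Xi 0 r‖ ≤ R.C0 * h ^ γ * h := by
    have := R.normAt_le 0 hh h1
    rwa [zero_add] at this
  rw [hid, norm_smul]
  have hn : ‖(1/h : ℝ)‖ = 1/h := by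
    rw [Real.norm_eq_abs, abs_of_pos (by positivity)]
  rw [hn]
  calc (1/h) * ‖(∫ r in t..(t+h), R.Xi t r) - ∫ r in (0:ℝ)..h, R.Xi 0 r‖
      ≤ (1/h) * (R.C0 * h ^ γ * h + R.C0 * h ^ γ * h) := by
        refine mul_le_mul_of_nonneg_left ?_ (by positivity)
        exact le_trans (norm_sub_le _ _) (add_le_add (R.normAt_le t hh h1) hA0)
    _ = 2 * R.C0 * h ^ γ := by field_simp; ring

lemma cauchy_key {a b t : ℝ} (hb : 0 < b) (hba : b ≤ a) (ha1 : a ≤ 1)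
    (ht0 : 0 ≤ t) (htT : t ≤ T) (n : ℕ) (hn : 1 ≤ n) (hab : a/(n:ℝ) ≤ b) :
    ‖R.psi a t - R.psi b t‖
      ≤ 4*R.C0*a^γ + (R.K4 + 2*R.K5)*a^(3*γ-1) + 2*R.C1*(a/(n:ℝ))^γ/b := by
  have ha : 0 < a := lt_of_lt_of_le hb hba
  have hγ := R.hγ
  have he1 := R.he1
  have hK4 := R.hK4
  have hK5 := R.hK5
  have hC0 := R.hC0
  have hC1 := R.hC1
  have hnR : (0:ℝ) < (n:ℝ) := by exact_mod_cast hn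
  set u : ℝ := a/(n:ℝ) with hu_def
  have hu : 0 < u := div_pos ha hnR
  have hnu : (n:ℝ)*u = a := by rw [hu_def]; field_simp
  have hu1 : u ≤ 1 := le_trans (le_trans hab hba) ha1
  -- F a vs n • F u
  have s1 : ‖R.F a t - n • R.F u t‖ ≤ R.K5 * a^(3*γ) := by
    have := R.F_nsplit n u hn hu (by rw [hnu]; exact ha1) t ht0 htT
    rwa [hnu] at this
  -- F b vs k • F u
  set k : ℕ := ⌊b/u⌋₊ with hk_def
  have hk1 : 1 ≤ k := Nat.le_floor (by rw [Nat.cast_one, le_div_iff₀ hu, one_mul]; exact hab)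
  have hkR : (0:ℝ) < (k:ℝ) := by exact_mod_cast hk1
  have hkub : (k:ℝ)*u ≤ b := by
    have := Nat.floor_le (le_of_lt (div_pos hb hu))
    calc (k:ℝ)*u ≤ (b/u)*u := mul_le_mul_of_nonneg_right this hu.le
      _ = b := by field_simp
  have hkub2 : b < (k:ℝ)*u + u := by
    have := Nat.lt_floor_add_one (b/u)
    have h2 : b/u * u < ((k:ℝ)+1) * u := by
      exact mul_lt_mul_of_pos_right (by exact_mod_cast this) hu
    calc b = b/u*u := by field_simp
      _ < ((k:ℝ)+1)*u := h2
      _ = (k:ℝ)*u + u := by ring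
  have hku_pos : 0 < (k:ℝ)*u := by positivity
  have hb1 : b ≤ 1 := le_trans hba ha1
  have s2 : ‖R.F b t - k • R.F u t‖ ≤ (R.K4 + R.K5)*b^(3*γ) + R.C1*u^γ := by
    have hkb : (k:ℝ)*u ≤ 1 := le_trans hkub hb1
    have hns : ‖R.F ((k:ℝ)*u) t - k • R.F u t‖ ≤ R.K5 * ((k:ℝ)*u)^(3*γ) :=
      R.F_nsplit k u hk1 hu hkb t ht0 htT
    have hkb3γ : ((k:ℝ)*u)^(3*γ) ≤ b^(3*γ) :=
      Real.rpow_le_rpow hku_pos.le hkub (by linarith)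
    rcases eq_or_lt_of_le (by linarith : (0:ℝ) ≤ b - (k:ℝ)*u) with hrem | hrem
    · -- b = k*u
      have hbk : (k:ℝ)*u = b := by linarith
      calc ‖R.F b t - k • R.F u t‖ = ‖R.F ((k:ℝ)*u) t - k • R.F u t‖ := by rw [hbk]
        _ ≤ R.K5 * ((k:ℝ)*u)^(3*γ) := hns
        _ ≤ (R.K4 + R.K5)*b^(3*γ) + R.C1*u^γ := by
            have h1 : R.K5 * ((k:ℝ)*u)^(3*γ) ≤ R.K5 * b^(3*γ) :=
              mul_le_mul_of_nonneg_left hkb3γ hK5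
            have h2 : (0:ℝ) ≤ R.K4 * b^(3*γ) := mul_nonneg hK4 (Real.rpow_nonneg hb.le _)
            have h3 : (0:ℝ) ≤ R.C1*u^γ := mul_nonneg hC1 (Real.rpow_nonneg hu.le _)
            linarith
    · -- positive remainder
      set rem : ℝ := b - (k:ℝ)*u with hrem_def
      have hremu : rem ≤ u := by simp only [hrem_def]; linarith
      have hsp : ‖R.F ((k:ℝ)*u + rem) t - R.F ((k:ℝ)*u) t - R.F rem t‖
          ≤ R.K4 * ((k:ℝ)*u + rem)^(3*γ) :=
        R.F_split_norm hku_pos hrem (by simp only [hrem_def]; rw [show (k:ℝ)*u + (b - (k:ℝ)*u) = b by ring]; exact hb1) ht0 htT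
      have hco : (k:ℝ)*u + rem = b := by simp only [hrem_def]; ring
      rw [hco] at hsp
      have hfr : ‖R.F rem t‖ ≤ R.C1 * u^γ := by
        calc ‖R.F rem t‖ ≤ R.C1 * rem^γ := R.norm_F_le hrem (le_trans hremu hu1) ht0 htT
          _ ≤ R.C1 * u^γ := mul_le_mul_of_nonneg_left
              (Real.rpow_le_rpow hrem.le hremu hγ.le) hC1
      calc ‖R.F b t - k • R.F u t‖
          = ‖(R.F b t - R.F ((k:ℝ)*u) t - R.F rem t) + (R.F ((k:ℝ)*u) t - k • R.F u t) + R.F rem t‖ := by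
            congr 1; abel
        _ ≤ ‖R.F b t - R.F ((k:ℝ)*u) t - R.F rem t‖ + ‖R.F ((k:ℝ)*u) t - k • R.F u t‖
            + ‖R.F rem t‖ := le_trans (norm_add_le _ _) (by gcongr; exact norm_add_le _ _)
        _ ≤ R.K4 * b^(3*γ) + R.K5 * ((k:ℝ)*u)^(3*γ) + R.C1*u^γ := add_le_add (add_le_add hsp hns) hfr
        _ ≤ (R.K4 + R.K5)*b^(3*γ) + R.C1*u^γ := by
            have := mul_le_mul_of_nonneg_left hkb3γ hK5
            linarith
  -- decomposition
  have hdec : R.psi a t - R.psi b t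
      = (R.psi a t - (1/a) • R.F a t) - (R.psi b t - (1/b) • R.F b t)
        + (1/a) • (R.F a t - n • R.F u t) - (1/b) • (R.F b t - k • R.F u t)
        + ((n:ℝ)/a - (k:ℝ)/b) • R.F u t := by
    have h1 : n • R.F u t = (n:ℝ) • R.F u t := (Nat.cast_smul_eq_nsmul ℝ n (R.F u t)).symm
    have h2 : k • R.F u t = (k:ℝ) • R.F u t := (Nat.cast_smul_eq_nsmul ℝ k (R.F u t)).symm
    rw [h1, h2]
    have ha' : a ≠ 0 := ha.ne'
    have hb' : b ≠ 0 := hb.ne'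
    rw [div_eq_mul_one_div (n:ℝ) a, div_eq_mul_one_div (k:ℝ) b]
    module
  -- norms of the five pieces
  have t1 : ‖R.psi a t - (1/a) • R.F a t‖ ≤ 2*R.C0*a^γ := R.psi_sub_F ha ha1
  have t2 : ‖R.psi b t - (1/b) • R.F b t‖ ≤ 2*R.C0*a^γ := by
    calc ‖R.psi b t - (1/b) • R.F b t‖ ≤ 2*R.C0*b^γ := R.psi_sub_F hb hb1
      _ ≤ 2*R.C0*a^γ := by
          have h := mul_le_mul_of_nonneg_left (Real.rpow_le_rpow hb.le hba hγ.le)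
            (by linarith : (0:ℝ) ≤ 2*R.C0)
          linarith
  have hapow : a^(3*γ) = a^(3*γ-1)*a := by
    rw [← Real.rpow_add_one ha.ne' (3*γ-1), sub_add_cancel]
  have hbpow : b^(3*γ) = b^(3*γ-1)*b := by
    rw [← Real.rpow_add_one hb.ne' (3*γ-1), sub_add_cancel]
  have t3 : ‖(1/a) • (R.F a t - n • R.F u t)‖ ≤ R.K5 * a^(3*γ-1) := by
    rw [norm_smul, Real.norm_eq_abs, abs_of_pos (by positivity : (0:ℝ) < 1/a)]
    calc (1/a) * ‖R.F a t - n • R.F u t‖ ≤ (1/a) * (R.K5 * a^(3*γ)) := by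
          exact mul_le_mul_of_nonneg_left s1 (by positivity)
      _ = R.K5 * a^(3*γ-1) := by rw [hapow]; field_simp
  have t4 : ‖(1/b) • (R.F b t - k • R.F u t)‖ ≤ (R.K4 + R.K5) * a^(3*γ-1) + R.C1*u^γ/b := by
    rw [norm_smul, Real.norm_eq_abs, abs_of_pos (by positivity : (0:ℝ) < 1/b)]
    calc (1/b) * ‖R.F b t - k • R.F u t‖
        ≤ (1/b) * ((R.K4 + R.K5)*b^(3*γ) + R.C1*u^γ) := by
          exact mul_le_mul_of_nonneg_left s2 (by positivity)
      _ = (R.K4 + R.K5) * b^(3*γ-1) + R.C1*u^γ/b := by rw [hbpow]; field_simp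
      _ ≤ (R.K4 + R.K5) * a^(3*γ-1) + R.C1*u^γ/b := by
          have h := mul_le_mul_of_nonneg_left
            (Real.rpow_le_rpow hb.le hba (by linarith : (0:ℝ) ≤ 3*γ-1))
            (by linarith : (0:ℝ) ≤ R.K4 + R.K5)
          linarith
  have t5 : ‖((n:ℝ)/a - (k:ℝ)/b) • R.F u t‖ ≤ R.C1*u^γ/b := by
    rw [norm_smul, Real.norm_eq_abs]
    have hFu : ‖R.F u t‖ ≤ R.C1 * u^γ := R.norm_F_le hu hu1 ht0 htT
    have habs : |(n:ℝ)/a - (k:ℝ)/b| ≤ 1/b := by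
      have hna : (n:ℝ)/a = 1/u := by rw [hu_def]; field_simp
      rw [hna]
      have hdiff : 1/u - (k:ℝ)/b = (b - (k:ℝ)*u)/(u*b) := by field_simp
      rw [hdiff, abs_of_nonneg (div_nonneg (by linarith) (by positivity))]
      calc (b - (k:ℝ)*u)/(u*b) ≤ u/(u*b) := by
            have hub : (0:ℝ) < u*b := by positivity
            exact (div_le_div_iff_of_pos_right hub).mpr (by linarith)
        _ = 1/b := by field_simp
    calc |(n:ℝ)/a - (k:ℝ)/b| * ‖R.F u t‖ ≤ (1/b) * (R.C1 * u^γ) :=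
        mul_le_mul habs hFu (norm_nonneg _) (by positivity)
      _ = R.C1*u^γ/b := by ring
  rw [hdec]
  calc ‖R.psi a t - (1/a) • R.F a t - (R.psi b t - (1/b) • R.F b t)
        + (1/a) • (R.F a t - n • R.F u t) - (1/b) • (R.F b t - k • R.F u t)
        + ((n:ℝ)/a - (k:ℝ)/b) • R.F u t‖
      ≤ ‖R.psi a t - (1/a) • R.F a t - (R.psi b t - (1/b) • R.F b t)
        + (1/a) • (R.F a t - n • R.F u t) - (1/b) • (R.F b t - k • R.F u t)‖
        + ‖((n:ℝ)/a - (k:ℝ)/b) • R.F u t‖ := norm_add_le _ _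
    _ ≤ (‖R.psi a t - (1/a) • R.F a t - (R.psi b t - (1/b) • R.F b t)
        + (1/a) • (R.F a t - n • R.F u t)‖ + ‖(1/b) • (R.F b t - k • R.F u t)‖)
        + ‖((n:ℝ)/a - (k:ℝ)/b) • R.F u t‖ := by gcongr; exact norm_sub_le _ _
    _ ≤ ((‖R.psi a t - (1/a) • R.F a t - (R.psi b t - (1/b) • R.F b t)‖
        + ‖(1/a) • (R.F a t - n • R.F u t)‖) + ‖(1/b) • (R.F b t - k • R.F u t)‖)
        + ‖((n:ℝ)/a - (k:ℝ)/b) • R.F u t‖ := by gcongr; exact norm_add_le _ _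
    _ ≤ (((‖R.psi a t - (1/a) • R.F a t‖ + ‖R.psi b t - (1/b) • R.F b t‖)
        + ‖(1/a) • (R.F a t - n • R.F u t)‖) + ‖(1/b) • (R.F b t - k • R.F u t)‖)
        + ‖((n:ℝ)/a - (k:ℝ)/b) • R.F u t‖ := by gcongr; exact norm_sub_le _ _
    _ ≤ (((2*R.C0*a^γ + 2*R.C0*a^γ) + R.K5 * a^(3*γ-1))
        + ((R.K4 + R.K5) * a^(3*γ-1) + R.C1*u^γ/b)) + R.C1*u^γ/b :=
        add_le_add (add_le_add (add_le_add (add_le_add t1 t2) t3) t4) t5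
    _ = 4*R.C0*a^γ + (R.K4 + 2*R.K5)*a^(3*γ-1) + 2*R.C1*u^γ/b := by ring

lemma psi_cauchy : ∀ e : ℝ, 0 < e → ∃ δ : ℝ, 0 < δ ∧ δ ≤ 1 ∧
    ∀ a b t : ℝ, a ∈ Ioo (0:ℝ) δ → b ∈ Ioo (0:ℝ) δ → t ∈ Icc (0:ℝ) T →
      ‖R.psi a t - R.psi b t‖ < e := by
  intro e he
  have hγ := R.hγ
  have he1 := R.he1
  have hC0 := R.hC0
  have hC1 := R.hC1
  have hK4 := R.hK4
  have hK5 := R.hK5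
  -- the leading error term tends to 0 along 𝓝[>] 0
  have hconv : Tendsto (fun a : ℝ => 4*R.C0*a^γ + (R.K4 + 2*R.K5)*a^(3*γ-1))
      (𝓝[>] (0:ℝ)) (𝓝 0) := by
    have b1 : Tendsto (fun a : ℝ => 4*R.C0*|a - 0|^γ + (R.K4 + 2*R.K5)*|a - 0|^(3*γ-1))
        (𝓝 (0:ℝ)) (𝓝 0) := by
      have := (aux_tendsto_rpow 0 (4*R.C0) γ hγ).add
        (aux_tendsto_rpow 0 (R.K4 + 2*R.K5) (3*γ-1) (by linarith))
      simpa using this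
    have b2 := b1.mono_left (nhdsWithin_le_nhds (s := Ioi (0:ℝ)))
    refine b2.congr' ?_
    filter_upwards [self_mem_nhdsWithin] with a (ha : a ∈ Ioi (0:ℝ))
    rw [sub_zero, abs_of_pos ha]
  have hev : {a : ℝ | 4*R.C0*a^γ + (R.K4 + 2*R.K5)*a^(3*γ-1) < e/2} ∈ 𝓝[>] (0:ℝ) :=
    hconv (Iio_mem_nhds (by linarith : (0:ℝ) < e/2))
  have hev2 : {a : ℝ | 4*R.C0*a^γ + (R.K4 + 2*R.K5)*a^(3*γ-1) < e/2} ∩ Iio 1 ∈ 𝓝[>] (0:ℝ) :=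
    Filter.inter_mem hev (nhdsWithin_le_nhds (Iio_mem_nhds one_pos))
  obtain ⟨δ', hδ'pos, hδ'sub⟩ := mem_nhdsGT_iff_exists_Ioo_subset.1 hev2
  refine ⟨min δ' 1, lt_min hδ'pos one_pos, min_le_right _ _, ?_⟩
  -- main estimate, symmetric in a and b
  have main : ∀ a b t : ℝ, b ≤ a → a ∈ Ioo (0:ℝ) (min δ' 1) → b ∈ Ioo (0:ℝ) (min δ' 1) →
      t ∈ Icc (0:ℝ) T → ‖R.psi a t - R.psi b t‖ < e := by
    intro a b t hba ha hb ht
    have ha0 : 0 < a := ha.1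
    have hb0 : 0 < b := hb.1
    have ha1 : a ≤ 1 := le_of_lt (lt_of_lt_of_le ha.2 (min_le_right _ _))
    have hbd : 4*R.C0*a^γ + (R.K4 + 2*R.K5)*a^(3*γ-1) < e/2 := by
      have : a ∈ Ioo (0:ℝ) δ' := ⟨ha0, lt_of_lt_of_le ha.2 (min_le_left _ _)⟩
      exact (hδ'sub this).1
    -- choose n large
    set z : ℝ := (e * b / (4 * (R.C1+1))) ^ (γ⁻¹) with hz_def
    have hzarg : 0 < e * b / (4 * (R.C1+1)) := by positivity
    have hz : 0 < z := Real.rpow_pos_of_pos hzarg _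
    have hw : 0 < min b z := lt_min hb0 hz
    obtain ⟨n, hn⟩ := exists_nat_gt (max 1 (a / min b z))
    have hn1R : (1:ℝ) < n := lt_of_le_of_lt (le_max_left _ _) hn
    have hn1 : 1 ≤ n := by exact_mod_cast hn1R.le
    have hnpos : (0:ℝ) < n := by linarith
    have hanw : a / (n:ℝ) < min b z := by
      rw [div_lt_iff₀ hnpos]
      have := (div_lt_iff₀ hw).1 (lt_of_le_of_lt (le_max_right 1 _) hn)
      linarith [this]
    have hanb : a/(n:ℝ) ≤ b := le_of_lt (lt_of_lt_of_le hanw (min_le_left _ _))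
    have key := R.cauchy_key hb0 hba ha1 ht.1 ht.2 n hn1 hanb
    -- bound the last term
    have hlast : 2*R.C1*(a/(n:ℝ))^γ/b < e/2 := by
      have h1 : (a/(n:ℝ))^γ ≤ e * b / (4 * (R.C1+1)) := by
        have g1 : (a/(n:ℝ))^γ ≤ z^γ :=
          Real.rpow_le_rpow (by positivity) (le_of_lt (lt_of_lt_of_le hanw (min_le_right _ _))) hγ.le
        have g2 : z^γ = e * b / (4 * (R.C1+1)) := by
          rw [hz_def]
          exact Real.rpow_inv_rpow hzarg.le hγ.ne'
        rw [← g2]; exact g1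
      have h2 : 2*R.C1*(a/(n:ℝ))^γ/b ≤ 2*R.C1*(e * b / (4 * (R.C1+1)))/b := by
        gcongr
      have h3 : 2*R.C1*(e * b / (4 * (R.C1+1)))/b = e * (R.C1/(R.C1+1)) / 2 := by
        field_simp
        ring
      have h4 : R.C1/(R.C1+1) < 1 := by
        rw [div_lt_one (by linarith)]
        linarith
      have h5 : e * (R.C1/(R.C1+1)) / 2 < e/2 := by
        have h6 : 0 ≤ R.C1/(R.C1+1) := by positivity
        nlinarith
      linarith
    calc ‖R.psi a t - R.psi b t‖
        ≤ 4*R.C0*a^γ + (R.K4 + 2*R.K5)*a^(3*γ-1) + 2*R.C1*(a/(n:ℝ))^γ/b := key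
      _ < e/2 + e/2 := by linarith
      _ = e := by ring
  intro a b t ha hb ht
  rcases le_total b a with h | h
  · exact main a b t h ha hb ht
  · rw [norm_sub_rev]
    exact main b a t h hb ha ht

theorem main_det : ∃ L : ℝ → Fin d → ℝ,
    TendstoUniformlyOn
      (fun (ε : ℝ) (t : ℝ) => (1/ε) • ∫ s in (0:ℝ)..t,
        (R.y s • (R.x (s+ε) - R.x s) + R.y' s ᵥ* R.xx s (s+ε)))
      L (𝓝[>] 0) (Icc 0 T) := by
  have hfun : (fun (ε : ℝ) (t : ℝ) => (1/ε) • ∫ s in (0:ℝ)..t,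
      (R.y s • (R.x (s+ε) - R.x s) + R.y' s ᵥ* R.xx s (s+ε))) = fun ε t => R.psi ε t := rfl
  rw [hfun]
  have hUC : UniformCauchySeqOn (fun ε t => R.psi ε t) (𝓝[>] (0:ℝ)) (Icc 0 T) := by
    intro v hv
    rcases Metric.mem_uniformity_dist.1 hv with ⟨e, he, hsub⟩
    obtain ⟨δ, hδ0, _, hkey⟩ := R.psi_cauchy e he
    have hmem : Ioo (0:ℝ) δ ∈ 𝓝[>] (0:ℝ) := Ioo_mem_nhdsGT_of_mem ⟨le_refl 0, hδ0⟩
    filter_upwards [Filter.prod_mem_prod hmem hmem] with p hp t ht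
    exact hsub (by rw [dist_eq_norm]; exact hkey p.1 p.2 t hp.1 hp.2 ht)
  have hpt : ∀ t : ℝ, ∃ l : Fin d → ℝ, t ∈ Icc (0:ℝ) T →
      Tendsto (fun h => R.psi h t) (𝓝[>] (0:ℝ)) (𝓝 l) := by
    intro t
    by_cases ht : t ∈ Icc (0:ℝ) T
    · obtain ⟨l, hl⟩ := CompleteSpace.complete (hUC.cauchy_map ht)
      exact ⟨l, fun _ => hl⟩
    · exact ⟨0, fun h => absurd h ht⟩
  choose L hL using hpt
  exact ⟨L, hUC.tendstoUniformlyOn_of_tendsto (fun t ht => hL t ht)⟩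

end RoughData

theorem stmt8 {Ω : Type*} [MeasurableSpace Ω] (μ : Measure Ω) [IsProbabilityMeasure μ]
    (T γ : ℝ) (hT : 0 < T) (hγl : 1/3 < γ) (hγu : γ < 1/2) (d : ℕ)
    (X : ℝ → Ω → Fin d → ℝ) (XX : ℝ → ℝ → Ω → Matrix (Fin d) (Fin d) ℝ)
    (Y : ℝ → Ω → ℝ) (Y' : ℝ → Ω → Fin d → ℝ)
    (hXe : ∀ t ω, X t ω = X (min t T) ω)
    (hXXe : ∀ s t ω, XX s t ω = XX (min s T) (min t T) ω)
    (hYe : ∀ t ω, Y t ω = Y (min t T) ω) (hY'e : ∀ t ω, Y' t ω = Y' (min t T) ω)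
    -- the second-order process vanishes on the diagonal
    (hXXdiag : ∀ t ω, XX t t ω = 0)
    -- almost surely: `X ∈ C^γ`, `𝕏 ∈ C^{2γ}`, Chen's relation, `Y, Y' ∈ C^γ`
    -- and `‖R^Y‖_{2γ} < ∞`
    (has : ∀ᵐ ω ∂μ,
      (∃ C : ℝ, ∀ s ∈ Icc (0:ℝ) T, ∀ t ∈ Icc (0:ℝ) T, ‖X t ω - X s ω‖ ≤ C * |t - s| ^ γ) ∧
      (∃ C : ℝ, ∀ s ∈ Icc (0:ℝ) T, ∀ t ∈ Icc (0:ℝ) T, ∀ i j : Fin d,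
        |XX s t ω i j| ≤ C * |t - s| ^ (2*γ)) ∧
      (∀ s ∈ Icc (0:ℝ) T, ∀ u ∈ Icc (0:ℝ) T, ∀ t ∈ Icc (0:ℝ) T,
        -XX u t ω + XX s t ω - XX s u ω = vecMulVec (X u ω - X s ω) (X t ω - X u ω)) ∧
      (∃ C : ℝ, ∀ s ∈ Icc (0:ℝ) T, ∀ t ∈ Icc (0:ℝ) T, |Y t ω - Y s ω| ≤ C * |t - s| ^ γ) ∧
      (∃ C : ℝ, ∀ s ∈ Icc (0:ℝ) T, ∀ t ∈ Icc (0:ℝ) T, ‖Y' t ω - Y' s ω‖ ≤ C * |t - s| ^ γ) ∧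
      (∃ C : ℝ, ∀ s ∈ Icc (0:ℝ) T, ∀ t ∈ Icc (0:ℝ) T,
        |Y t ω - Y s ω - Y' s ω ⬝ᵥ (X t ω - X s ω)| ≤ C * |t - s| ^ (2*γ))) :
    -- almost surely the rough integral approximations converge uniformly in `t ∈ [0,T]`
    ∀ᵐ ω ∂μ, ∃ L : ℝ → Fin d → ℝ,
      TendstoUniformlyOn
        (fun (ε : ℝ) (t : ℝ) => (1/ε) • ∫ s in (0:ℝ)..t,
          (Y s ω • (X (s+ε) ω - X s ω) + Y' s ω ᵥ* XX s (s+ε) ω))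
        L (𝓝[>] 0) (Icc 0 T) := by
  filter_upwards [has] with ω hω
  obtain ⟨⟨CX, hX⟩, ⟨CXX, hXX⟩, hch, ⟨CY, hY⟩, ⟨CY', hY'⟩, ⟨CR, hR⟩⟩ := hω
  have hγ : 0 < γ := by linarith
  set cl : ℝ → ℝ := fun t => min (max t 0) T with hcl
  have hclmem : ∀ t, cl t ∈ Icc (0:ℝ) T :=
    fun t => ⟨le_min (le_max_right t 0) hT.le, min_le_right _ _⟩
  have hcl0 : cl 0 = 0 := by simp [hcl, hT.le]
  have hclnn : ∀ s, 0 ≤ s → cl s = min s T := fun s hs => by simp [hcl, max_eq_left hs]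
  have hlip : ∀ a b : ℝ, |cl a - cl b| ≤ |a - b| := fun a b => aux_clamp_lip T a b
  have hdiffT : ∀ a b : ℝ, |cl a - cl b| ≤ T := by
    intro a b
    have h1 := hclmem a
    have h2 := hclmem b
    rw [abs_le]
    constructor <;> [linarith [h1.1, h2.2]; linarith [h1.2, h2.1]]
  have hstep : ∀ (C v w ee : ℝ), 0 ≤ ee → 0 ≤ v → v ≤ w → C * v ^ ee ≤ max C 0 * w ^ ee := by
    intro C v w ee hee hv hvw
    exact mul_le_mul (le_max_left C 0) (Real.rpow_le_rpow hv hvw hee)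
      (Real.rpow_nonneg hv _) (le_max_right C 0)
  set R : RoughData d T γ :=
  { x := fun t => X (cl t) ω
    xx := fun s t => XX (cl s) (cl t) ω
    y := fun t => Y (cl t) ω
    y' := fun t => Y' (cl t) ω
    CX := max CX 0
    CXX := max CXX 0
    CY := max CY 0
    CY' := max CY' 0
    CR := max CR 0
    MY := |Y 0 ω| + max CY 0 * T^γ
    MY' := ‖Y' 0 ω‖ + max CY' 0 * T^γ
    MX := max CX 0 * T^γ
    hT := hT
    hγl := hγl
    hγu := hγu
    hCX := le_max_right _ _
    hCXX := le_max_right _ _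
    hCY := le_max_right _ _
    hCY' := le_max_right _ _
    hCR := le_max_right _ _
    hMY := add_nonneg (abs_nonneg _)
      (mul_nonneg (le_max_right _ _) (Real.rpow_nonneg hT.le _))
    hMY' := add_nonneg (norm_nonneg _)
      (mul_nonneg (le_max_right _ _) (Real.rpow_nonneg hT.le _))
    hMX := mul_nonneg (le_max_right _ _) (Real.rpow_nonneg hT.le _)
    hx := fun s t => by
      calc ‖X (cl t) ω - X (cl s) ω‖ ≤ CX * |cl t - cl s| ^ γ :=
          hX (cl s) (hclmem s) (cl t) (hclmem t)
        _ ≤ max CX 0 * |t - s| ^ γ := hstep _ _ _ _ hγ.le (abs_nonneg _) (hlip t s)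
    hxx := fun s t i j => by
      calc |XX (cl s) (cl t) ω i j| ≤ CXX * |cl t - cl s| ^ (2*γ) :=
          hXX (cl s) (hclmem s) (cl t) (hclmem t) i j
        _ ≤ max CXX 0 * |t - s| ^ (2*γ) :=
          hstep _ _ _ _ (by linarith) (abs_nonneg _) (hlip t s)
    hchen := fun s u t => hch (cl s) (hclmem s) (cl u) (hclmem u) (cl t) (hclmem t)
    hy := fun s t => by
      calc |Y (cl t) ω - Y (cl s) ω| ≤ CY * |cl t - cl s| ^ γ :=
          hY (cl s) (hclmem s) (cl t) (hclmem t)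
        _ ≤ max CY 0 * |t - s| ^ γ := hstep _ _ _ _ hγ.le (abs_nonneg _) (hlip t s)
    hy' := fun s t => by
      calc ‖Y' (cl t) ω - Y' (cl s) ω‖ ≤ CY' * |cl t - cl s| ^ γ :=
          hY' (cl s) (hclmem s) (cl t) (hclmem t)
        _ ≤ max CY' 0 * |t - s| ^ γ := hstep _ _ _ _ hγ.le (abs_nonneg _) (hlip t s)
    hR := fun s t => by
      calc |Y (cl t) ω - Y (cl s) ω - Y' (cl s) ω ⬝ᵥ (X (cl t) ω - X (cl s) ω)|
          ≤ CR * |cl t - cl s| ^ (2*γ) := hR (cl s) (hclmem s) (cl t) (hclmem t)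
        _ ≤ max CR 0 * |t - s| ^ (2*γ) :=
          hstep _ _ _ _ (by linarith) (abs_nonneg _) (hlip t s)
    hyb := fun s => by
      have h1 : |Y (cl s) ω - Y (cl 0) ω| ≤ CY * |cl s - cl 0| ^ γ :=
        hY (cl 0) (hclmem 0) (cl s) (hclmem s)
      have h2 : CY * |cl s - cl 0| ^ γ ≤ max CY 0 * T ^ γ :=
        hstep _ _ _ _ hγ.le (abs_nonneg _) (hdiffT s 0)
      rw [hcl0] at h1
      calc |Y (cl s) ω| = |(Y (cl s) ω - Y 0 ω) + Y 0 ω| := by ring_nf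
        _ ≤ |Y (cl s) ω - Y 0 ω| + |Y 0 ω| := abs_add_le _ _
        _ ≤ |Y 0 ω| + max CY 0 * T^γ := by rw [hcl0] at h2; linarith
    hy'b := fun s => by
      have h1 : ‖Y' (cl s) ω - Y' (cl 0) ω‖ ≤ CY' * |cl s - cl 0| ^ γ :=
        hY' (cl 0) (hclmem 0) (cl s) (hclmem s)
      have h2 : CY' * |cl s - cl 0| ^ γ ≤ max CY' 0 * T ^ γ :=
        hstep _ _ _ _ hγ.le (abs_nonneg _) (hdiffT s 0)
      rw [hcl0] at h1
      rw [hcl0] at h2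
      calc ‖Y' (cl s) ω‖ = ‖(Y' (cl s) ω - Y' 0 ω) + Y' 0 ω‖ := by rw [sub_add_cancel]
        _ ≤ ‖Y' (cl s) ω - Y' 0 ω‖ + ‖Y' 0 ω‖ := norm_add_le _ _
        _ ≤ ‖Y' 0 ω‖ + max CY' 0 * T^γ := by linarith
    hxb := fun s t => by
      calc ‖X (cl t) ω - X (cl s) ω‖ ≤ CX * |cl t - cl s| ^ γ :=
          hX (cl s) (hclmem s) (cl t) (hclmem t)
        _ ≤ max CX 0 * T ^ γ := hstep _ _ _ _ hγ.le (abs_nonneg _) (hdiffT t s) }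
    with hRdef
  obtain ⟨L, hL⟩ := R.main_det
  refine ⟨L, hL.congr ?_⟩
  filter_upwards [self_mem_nhdsWithin] with ε (hε : ε ∈ Ioi (0:ℝ))
  intro t ht
  simp only
  congr 1
  refine intervalIntegral.integral_congr (fun s hs => ?_)
  rw [Set.uIcc_of_le ht.1] at hs
  have hs0 : 0 ≤ s := hs.1
  have hsε : 0 ≤ s + ε := by
    have : 0 < ε := hε
    linarith
  have ex : ∀ r, 0 ≤ r → X (cl r) ω = X r ω := fun r hr => by
    rw [hclnn r hr, ← hXe r ω]
  have ey : ∀ r, 0 ≤ r → Y (cl r) ω = Y r ω := fun r hr => by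
    rw [hclnn r hr, ← hYe r ω]
  have ey' : ∀ r, 0 ≤ r → Y' (cl r) ω = Y' r ω := fun r hr => by
    rw [hclnn r hr, ← hY'e r ω]
  have exx : XX (cl s) (cl (s+ε)) ω = XX s (s+ε) ω := by
    rw [hclnn s hs0, hclnn (s+ε) hsε, ← hXXe s (s+ε) ω]
  show Y (cl s) ω • (X (cl (s+ε)) ω - X (cl s) ω) + Y' (cl s) ω ᵥ* XX (cl s) (cl (s+ε)) ω
    = Y s ω • (X (s+ε) ω - X s ω) + Y' s ω ᵥ* XX s (s+ε) ω
  rw [ex s hs0, ex (s+ε) hsε, ey s hs0, ey' s hs0, exx]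
end
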